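/- arXiv:1205.3982 — 7 statements merged into one kernel-verified Lean document; each statement's English description precedes it below -/
import Mathlib

section
/- For 1 ≤ j ≤ m, S ⊆ {1, …, n} nonempty, and k ∈ {1, …, n}, define U(j,S,k) ∈ ℝ ∪ {−∞} as the maximum, over all partitions of the items 1, …, j into |S| nonempty consecutive blocks assigned bijectively to the players of S with player k receiving the last block (the one containing item j), of Σ_{i∈S} (total value of i's block to player i); set U(j,S,k) = −∞ if k ∉ S or |S| > j. Then U(1,S,k) = v_k(1) if S = {k} and U(1,S,k) = −∞ otherwise; and for every 1 ≤ j < m, every nonempty S ⊆ {1, …, n}, and every k ∈ S: U(j+1, S, k) = max( U(j, S, k) + v_k(j+1), max_{i ∈ S∖{k}} U(j, S∖{k}, i) + v_k(j+1) ), where a maximum over the empty set is −∞. (Correctness of the dynamic-programming recurrence in the FPT-FPTAS for utilitarian welfare, Theorem 4.) -/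
noncomputable def erealAddIso (x : ℝ) : EReal ≃o EReal where
  toFun a := a + (x : EReal)
  invFun a := a - (x : EReal)
  left_inv a := EReal.add_sub_cancel_right
  right_inv a := EReal.sub_add_cancel
  map_rel_iff' {a b} := (EReal.addLECancellable_coe x).add_le_add_iff_right

lemma sSup_image_add (T : Set EReal) (x : ℝ) :
    sSup ((fun w => w + (x : EReal)) '' T) = sSup T + (x : EReal) := by
  have := (erealAddIso x).map_sSup T
  rw [← sSup_image] at this
  exact this.symm

lemma max_add_coe (a b : EReal) (x : ℝ) :
    max (a + (x : EReal)) (b + (x : EReal)) = max a b + (x : EReal) := by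
  rcases le_total a b with h | h
  · rw [max_eq_right h, max_eq_right (add_le_add_left h _)]
  · rw [max_eq_left h, max_eq_left (add_le_add_left h _)]

lemma sSup_fin_biUnion {α : Type*} [CompleteLattice α] {ι : Type*} [DecidableEq ι]
    (s : Finset ι) (t : ι → Set α) :
    sSup (⋃ i ∈ s, t i) = s.sup (fun i => sSup (t i)) := by
  apply le_antisymm
  · apply sSup_le; rintro a ha
    rcases Set.mem_iUnion₂.mp ha with ⟨i, hi, hai⟩
    exact le_trans (le_sSup hai) (Finset.le_sup (f := fun i => sSup (t i)) hi)
  · apply Finset.sup_le; intro i hi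
    exact sSup_le fun a ha => le_sSup (Set.mem_biUnion hi ha)

lemma strictMono_val_le {N : ℕ} {c : Fin (N + 1) → ℕ} (h : StrictMono c) (h0 : c 0 = 0)
    (i : Fin (N + 1)) : i.1 ≤ c i := by
  induction i using Fin.induction with
  | zero => simp [h0]
  | succ i ih =>
    have h2 := h (Fin.castSucc_lt_succ (i := i))
    simp only [Fin.val_succ]
    simp only [Fin.coe_castSucc] at ih h2
    omega


/-- `dpU n v j S k` is the maximum (as an extended real, `⊥` if no such partition
exists) over all partitions of the items `1, …, j` into `S.card` nonempty
consecutive blocks assigned bijectively to the players of `S`, with player `k`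
receiving the last block, of the total utilitarian welfare. -/
noncomputable def dpU (n : ℕ) (v : Fin n → ℕ → ℝ) (j : ℕ) (S : Finset (Fin n))
    (k : Fin n) : EReal :=
  sSup {w : EReal |
    ∃ (hS : 0 < S.card) (c : Fin (S.card + 1) → ℕ) (σ : Fin S.card ≃ {i // i ∈ S}),
      StrictMono c ∧ c 0 = 0 ∧ c (Fin.last S.card) = j ∧
      ((σ ⟨S.card - 1, Nat.sub_lt hS one_pos⟩ : {i // i ∈ S}) : Fin n) = k ∧
      w = ((∑ b : Fin S.card,
        ∑ a ∈ Finset.Icc (c b.castSucc + 1) (c b.succ), v (σ b) a : ℝ) : EReal)}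

def dset (n : ℕ) (v : Fin n → ℕ → ℝ) (j : ℕ) (S : Finset (Fin n)) (k : Fin n) : Set EReal :=
  {w : EReal |
    ∃ (hS : 0 < S.card) (c : Fin (S.card + 1) → ℕ) (σ : Fin S.card ≃ {i // i ∈ S}),
      StrictMono c ∧ c 0 = 0 ∧ c (Fin.last S.card) = j ∧
      ((σ ⟨S.card - 1, Nat.sub_lt hS one_pos⟩ : {i // i ∈ S}) : Fin n) = k ∧
      w = ((∑ b : Fin S.card,
        ∑ a ∈ Finset.Icc (c b.castSucc + 1) (c b.succ), v (σ b) a : ℝ) : EReal)}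

lemma dpU_eq (n : ℕ) (v : Fin n → ℕ → ℝ) (j : ℕ) (S : Finset (Fin n)) (k : Fin n) :
    dpU n v j S k = sSup (dset n v j S k) := rfl

lemma sum_card_one (n : ℕ) (v : Fin n → ℕ → ℝ) (S : Finset (Fin n)) (k : Fin n)
    (hc : 0 < S.card) (h1 : S.card = 1) (c : Fin (S.card + 1) → ℕ)
    (σ : Fin S.card ≃ {i // i ∈ S})
    (h0 : c 0 = 0) (hlast : c (Fin.last S.card) = 1)
    (hσk : ((σ ⟨S.card - 1, Nat.sub_lt hc one_pos⟩ : {i // i ∈ S}) : Fin n) = k) :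
    (∑ b : Fin S.card,
        ∑ a ∈ Finset.Icc (c b.castSucc + 1) (c b.succ), v (σ b) a) = v k 1 := by
  have huniv : (Finset.univ : Finset (Fin S.card)) = {⟨0, hc⟩} := by
    ext b
    simp only [Finset.mem_univ, Finset.mem_singleton, true_iff]
    exact Fin.ext (by have := b.isLt; omega)
  rw [huniv, Finset.sum_singleton]
  have e1 : (⟨0, hc⟩ : Fin S.card).castSucc = 0 := Fin.ext (by simp)
  have e2 : (⟨0, hc⟩ : Fin S.card).succ = Fin.last S.card := Fin.ext (by simp [h1])
  have e3 : (⟨0, hc⟩ : Fin S.card) = ⟨S.card - 1, Nat.sub_lt hc one_pos⟩ := Fin.ext (by omega)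
  rw [e1, e2, h0, hlast, e3, hσk]
  simp

lemma part1 (n : ℕ) (v : Fin n → ℕ → ℝ) (S : Finset (Fin n)) (k : Fin n) :
    dpU n v 1 S k = if S = {k} then ((v k 1 : ℝ) : EReal) else ⊥ := by
  rw [dpU_eq]
  have key : ∀ w ∈ dset n v 1 S k, S = {k} ∧ w = ((v k 1 : ℝ) : EReal) := by
    rintro w ⟨hc, c, σ, hmono, h0, hlast, hσk, rfl⟩
    have hb := strictMono_val_le hmono h0 (Fin.last S.card)
    rw [Fin.val_last, hlast] at hb
    have h1 : S.card = 1 := by omega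
    have hkS : k ∈ S := by
      rw [← hσk]; exact (σ ⟨S.card - 1, Nat.sub_lt hc one_pos⟩).2
    have hSk : S = {k} := by
      obtain ⟨a, ha⟩ := Finset.card_eq_one.mp h1
      rw [ha] at hkS ⊢
      rw [Finset.mem_singleton.mp hkS]
    exact ⟨hSk, by rw [sum_card_one n v S k hc h1 c σ h0 hlast hσk]⟩
  split_ifs with h
  · apply le_antisymm
    · exact sSup_le fun w hw => ((key w hw).2).le
    · apply le_sSup
      subst h
      have hc : 0 < ({k} : Finset (Fin n)).card := by simp
      have hcard1 : ({k} : Finset (Fin n)).card = 1 := Finset.card_singleton k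
      refine ⟨hc, fun i => (i : ℕ), Equiv.ofBijective
        (fun _ => ⟨k, Finset.mem_singleton_self k⟩) ?_, ?_, ?_, ?_, ?_, ?_⟩
      · rw [Fintype.bijective_iff_injective_and_card]
        constructor
        · intro a b _
          exact Fin.ext (by have := a.isLt; have := b.isLt; omega)
        · simp [Fintype.card_coe]
      · exact fun a b hab => hab
      · simp
      · simp
      · rfl
      · rw [sum_card_one n v {k} k hc hcard1 _ _ (by simp) (by simp) rfl]
  · have hempty : dset n v 1 S k = ∅ := by
      ext w
      simp only [Set.mem_empty_iff_false, iff_false]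
      intro hw
      exact h (key w hw).1
    rw [hempty, sSup_empty]

lemma mem_extend (n : ℕ) (v : Fin n → ℕ → ℝ) (j : ℕ) (S : Finset (Fin n)) (k : Fin n)
    {w : EReal} (hw : w ∈ dset n v j S k) :
    w + ((v k (j + 1) : ℝ) : EReal) ∈ dset n v (j + 1) S k := by
  obtain ⟨hc, c, σ, hmono, h0, hlast, hσk, rfl⟩ := hw
  set bN : Fin S.card := ⟨S.card - 1, Nat.sub_lt hc one_pos⟩ with hbN
  have hsucc : bN.succ = Fin.last S.card := Fin.ext (by simp [hbN]; omega)
  set c' : Fin (S.card + 1) → ℕ := fun t => if t = Fin.last S.card then j + 1 else c t with hc'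
  have hne : ∀ t, t ≠ Fin.last S.card → c' t = c t := fun t h => if_neg h
  have hlast' : c' (Fin.last S.card) = j + 1 := if_pos rfl
  refine ⟨hc, c', σ, ?_, ?_, ?_, hσk, ?_⟩
  · intro a b hab
    by_cases hb : b = Fin.last S.card
    · subst hb
      have ha : a ≠ Fin.last S.card := ne_of_lt hab
      rw [hne a ha, hlast']
      have : c a ≤ c (Fin.last S.card) := hmono.monotone (le_of_lt hab)
      omega
    · have ha : a ≠ Fin.last S.card := by
        intro h; subst h
        exact absurd (lt_of_lt_of_le hab (Fin.le_last b)) (lt_irrefl _)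
      rw [hne a ha, hne b hb]; exact hmono hab
  · rw [hne 0 (by
      intro h
      have := congrArg Fin.val h
      simp only [Fin.val_zero, Fin.val_last] at this
      omega), h0]
  · exact hlast'
  · rw [← EReal.coe_add]
    congr 1
    have key : ∀ b : Fin S.card,
        (∑ a ∈ Finset.Icc (c' b.castSucc + 1) (c' b.succ), v (σ b) a)
        = (∑ a ∈ Finset.Icc (c b.castSucc + 1) (c b.succ), v (σ b) a)
          + (if b = bN then v k (j + 1) else 0) := by
      intro b
      have hcs : b.castSucc ≠ Fin.last S.card := (Fin.castSucc_lt_last b).ne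
      by_cases hb : b = bN
      · subst hb
        have hcp : c bN.castSucc < j := by
          have := hmono (show bN.castSucc < Fin.last S.card from Fin.castSucc_lt_last bN)
          rwa [hlast] at this
        rw [if_pos rfl, hne _ hcs, hsucc, hlast', hlast]
        have hins : Finset.Icc (c bN.castSucc + 1) (j + 1)
            = insert (j + 1) (Finset.Icc (c bN.castSucc + 1) j) := by
          ext t
          simp only [Finset.mem_Icc, Finset.mem_insert]
          omega
        rw [hins, Finset.sum_insert (by simp [Finset.mem_Icc]), hσk]
        ring
      · have hs : b.succ ≠ Fin.last S.card := by
          intro h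
          have := congrArg Fin.val h
          simp only [Fin.val_succ, Fin.val_last] at this
          exact hb (Fin.ext (by simp [hbN]; omega))
        rw [hne _ hcs, hne _ hs, if_neg hb, add_zero]
    rw [Finset.sum_congr rfl fun b _ => key b, Finset.sum_add_distrib,
      Finset.sum_ite_eq' Finset.univ bN (fun _ => v k (j + 1))]
    simp

lemma mem_split (n : ℕ) (v : Fin n → ℕ → ℝ) (j : ℕ) (S : Finset (Fin n)) (k i : Fin n)
    (hk : k ∈ S) {w : EReal} (hw : w ∈ dset n v j (S.erase k) i) :
    w + ((v k (j + 1) : ℝ) : EReal) ∈ dset n v (j + 1) S k := by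
  obtain ⟨hM, c, σ, hmono, h0, hlast, hσi, rfl⟩ := hw
  have hMN : (S.erase k).card + 1 = S.card := Finset.card_erase_add_one hk
  have hc : 0 < S.card := by omega
  set c' : Fin (S.card + 1) → ℕ :=
    fun t => if h : t.1 < (S.erase k).card + 1 then c ⟨t.1, h⟩ else j + 1 with hc'def
  have hc'val : ∀ (t : Fin (S.card + 1)) (s : Fin ((S.erase k).card + 1)),
      t.1 = s.1 → c' t = c s := by
    intro t s h
    have hlt : t.1 < (S.erase k).card + 1 := h ▸ s.isLt
    rw [show c' t = c ⟨t.1, hlt⟩ from dif_pos hlt]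
    congr 1
    exact Fin.ext h
  have hc'top : ∀ t : Fin (S.card + 1), (S.erase k).card + 1 ≤ t.1 → c' t = j + 1 :=
    fun t h => dif_neg (by omega)
  set f : Fin S.card → {x // x ∈ S} := fun b =>
    if h : b.1 < (S.erase k).card then
      ⟨(σ ⟨b.1, h⟩ : Fin n), Finset.mem_of_mem_erase (σ ⟨b.1, h⟩).2⟩
    else ⟨k, hk⟩ with hfdef
  have hfval : ∀ (b : Fin S.card) (s : Fin (S.erase k).card),
      b.1 = s.1 → (f b : Fin n) = (σ s : Fin n) := by
    intro b s h
    have hlt : b.1 < (S.erase k).card := h ▸ s.isLt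
    rw [show f b = ⟨(σ ⟨b.1, hlt⟩ : Fin n), Finset.mem_of_mem_erase (σ ⟨b.1, hlt⟩).2⟩
      from dif_pos hlt]
    have he : (⟨b.1, hlt⟩ : Fin (S.erase k).card) = s := Fin.ext h
    rw [he]
  have hfk : ∀ b : Fin S.card, (S.erase k).card ≤ b.1 → (f b : Fin n) = k := by
    intro b h
    rw [show f b = ⟨k, hk⟩ from dif_neg (by omega)]
  have hfinj : Function.Injective f := by
    intro a b hab
    have h1 : (f a : Fin n) = (f b : Fin n) := by rw [hab]
    by_cases ha : a.1 < (S.erase k).card <;> by_cases hb2 : b.1 < (S.erase k).card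
    · apply Fin.ext
      rw [hfval a ⟨a.1, ha⟩ rfl, hfval b ⟨b.1, hb2⟩ rfl] at h1
      have h2 := σ.injective (Subtype.ext h1)
      simpa using h2
    · exfalso
      rw [hfval a ⟨a.1, ha⟩ rfl, hfk b (by omega)] at h1
      exact (Finset.mem_erase.mp (σ ⟨a.1, ha⟩).2).1 h1
    · exfalso
      rw [hfk a (by omega), hfval b ⟨b.1, hb2⟩ rfl] at h1
      exact (Finset.mem_erase.mp (σ ⟨b.1, hb2⟩).2).1 h1.symm
    · apply Fin.ext
      have := a.isLt; have := b.isLt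
      omega
  have hfbij : Function.Bijective f := by
    rw [Fintype.bijective_iff_injective_and_card]
    exact ⟨hfinj, by simp [Fintype.card_coe]⟩
  refine ⟨hc, c', Equiv.ofBijective f hfbij, ?_, ?_, ?_, ?_, ?_⟩
  · intro a b hab
    have habv : a.1 < b.1 := hab
    have hav : a.1 < (S.erase k).card + 1 := by have := b.isLt; omega
    rw [hc'val a ⟨a.1, hav⟩ rfl]
    by_cases hb2 : b.1 < (S.erase k).card + 1
    · rw [hc'val b ⟨b.1, hb2⟩ rfl]
      exact hmono (show (⟨a.1, hav⟩ : Fin ((S.erase k).card + 1)) < ⟨b.1, hb2⟩ from habv)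
    · rw [hc'top b (by omega)]
      have hle : c ⟨a.1, hav⟩ ≤ c (Fin.last (S.erase k).card) :=
        hmono.monotone (show (⟨a.1, hav⟩ : Fin ((S.erase k).card + 1)) ≤ Fin.last _ by
          rw [Fin.le_def, Fin.val_last]; omega)
      rw [hlast] at hle
      omega
  · rw [hc'val 0 0 (by simp), h0]
  · exact hc'top _ (by rw [Fin.val_last]; omega)
  · exact hfk _ (by simp; omega)
  · rw [← EReal.coe_add]
    congr 1
    conv_rhs => rw [← Equiv.sum_comp (finCongr hMN)
      (fun b => ∑ a ∈ Finset.Icc (c' b.castSucc + 1) (c' b.succ),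
        v ((Equiv.ofBijective f hfbij) b) a)]
    rw [Fin.sum_univ_castSucc]
    congr 1
    · apply Finset.sum_congr rfl
      intro t _
      have e1 : c' ((finCongr hMN) t.castSucc).castSucc = c t.castSucc := hc'val _ _ (by simp)
      have e2 : c' ((finCongr hMN) t.castSucc).succ = c t.succ := hc'val _ _ (by simp)
      have e3 : ((Equiv.ofBijective f hfbij) ((finCongr hMN) t.castSucc) : Fin n)
          = (σ t : Fin n) := hfval _ t (by simp)
      rw [e1, e2, e3]
    · have e1 : c' ((finCongr hMN) (Fin.last (S.erase k).card)).castSucc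
          = c (Fin.last (S.erase k).card) := hc'val _ _ (by simp)
      have e2 : c' ((finCongr hMN) (Fin.last (S.erase k).card)).succ = j + 1 :=
        hc'top _ (by simp)
      have e3 : ((Equiv.ofBijective f hfbij) ((finCongr hMN) (Fin.last (S.erase k).card))
          : Fin n) = k := hfk _ (by simp)
      rw [e1, e2, e3, hlast]
      simp

lemma mem_analyze (n : ℕ) (v : Fin n → ℕ → ℝ) (j : ℕ) (hj : 1 ≤ j) (S : Finset (Fin n))
    (k : Fin n) (hk : k ∈ S) {w : EReal} (hw : w ∈ dset n v (j + 1) S k) :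
    ∃ w', (w' ∈ dset n v j S k ∨ ∃ i ∈ S.erase k, w' ∈ dset n v j (S.erase k) i) ∧
      w = w' + ((v k (j + 1) : ℝ) : EReal) := by
  obtain ⟨hc, c, σ, hmono, h0, hlast, hσk, rfl⟩ := hw
  set bN : Fin S.card := ⟨S.card - 1, Nat.sub_lt hc one_pos⟩ with hbN
  have hsucc : bN.succ = Fin.last S.card := Fin.ext (by simp [hbN]; omega)
  have hcplt : c bN.castSucc < j + 1 := by
    have := hmono (Fin.castSucc_lt_last bN); rwa [hlast] at this
  by_cases hcase : c bN.castSucc < j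
  · -- shrink the last block
    set c2 : Fin (S.card + 1) → ℕ := fun t => if t = Fin.last S.card then j else c t with hc2
    have hne : ∀ t, t ≠ Fin.last S.card → c2 t = c t := fun t h => if_neg h
    have hl2 : c2 (Fin.last S.card) = j := if_pos rfl
    refine ⟨((∑ b : Fin S.card,
        ∑ a ∈ Finset.Icc (c2 b.castSucc + 1) (c2 b.succ), v (σ b) a : ℝ) : EReal),
      Or.inl ⟨hc, c2, σ, ?_, ?_, hl2, hσk, rfl⟩, ?_⟩
    · intro a b hab
      by_cases hb : b = Fin.last S.card
      · subst hb
        have ha : a ≠ Fin.last S.card := ne_of_lt hab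
        rw [hne a ha, hl2]
        have hav : a.1 < S.card := by
          have := hab; rwa [Fin.lt_def, Fin.val_last] at this
        have hle : c a ≤ c bN.castSucc := hmono.monotone (by
          rw [Fin.le_def, Fin.coe_castSucc]; simp [hbN]; omega)
        omega
      · have ha : a ≠ Fin.last S.card := by
          intro h; subst h
          exact absurd (lt_of_lt_of_le hab (Fin.le_last b)) (lt_irrefl _)
        rw [hne a ha, hne b hb]; exact hmono hab
    · rw [hne 0 (by
        intro h
        have := congrArg Fin.val h
        simp only [Fin.val_zero, Fin.val_last] at this
        omega), h0]
    · rw [← EReal.coe_add]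
      congr 1
      have key : ∀ b : Fin S.card,
          (∑ a ∈ Finset.Icc (c b.castSucc + 1) (c b.succ), v (σ b) a)
          = (∑ a ∈ Finset.Icc (c2 b.castSucc + 1) (c2 b.succ), v (σ b) a)
            + (if b = bN then v k (j + 1) else 0) := by
        intro b
        have hcs : b.castSucc ≠ Fin.last S.card := (Fin.castSucc_lt_last b).ne
        by_cases hb : b = bN
        · subst hb
          rw [if_pos rfl, hne _ hcs, hsucc, hl2, hlast]
          have hins : Finset.Icc (c bN.castSucc + 1) (j + 1)
              = insert (j + 1) (Finset.Icc (c bN.castSucc + 1) j) := by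
            ext t
            simp only [Finset.mem_Icc, Finset.mem_insert]
            omega
          rw [hins, Finset.sum_insert (by simp [Finset.mem_Icc]), hσk]
          ring
        · have hs : b.succ ≠ Fin.last S.card := by
            intro h
            have := congrArg Fin.val h
            simp only [Fin.val_succ, Fin.val_last] at this
            exact hb (Fin.ext (by simp [hbN]; omega))
          rw [hne _ hcs, hne _ hs, if_neg hb, add_zero]
      rw [Finset.sum_congr rfl fun b _ => key b, Finset.sum_add_distrib,
        Finset.sum_ite_eq' Finset.univ bN (fun _ => v k (j + 1))]
      simp
  · -- the last block is exactly {j+1}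
    have hcp : c bN.castSucc = j := by omega
    have hcs0 : S.card - 1 ≠ 0 := by
      intro h
      have hz : bN.castSucc = 0 := Fin.ext (by simp [hbN, h])
      rw [hz, h0] at hcp; omega
    have hMN : (S.erase k).card + 1 = S.card := Finset.card_erase_add_one hk
    have hM : 0 < (S.erase k).card := by omega
    set c2 : Fin ((S.erase k).card + 1) → ℕ :=
      fun t => c ⟨t.1, by have := t.isLt; omega⟩ with hc2
    have hc2val : ∀ (s : Fin ((S.erase k).card + 1)) (t : Fin (S.card + 1)),
        s.1 = t.1 → c2 s = c t := by
      intro s t h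
      rw [hc2]
      exact congrArg c (Fin.ext h)
    have hblt : ∀ b : Fin (S.erase k).card, b.1 < S.card := fun b => by
      have := b.isLt; omega
    have hmem : ∀ b : Fin (S.erase k).card, ((σ ⟨b.1, hblt b⟩ : Fin n)) ∈ S.erase k := by
      intro b
      refine Finset.mem_erase.mpr ⟨?_, (σ ⟨b.1, hblt b⟩).2⟩
      intro he
      have h1 : σ ⟨b.1, hblt b⟩ = σ bN := Subtype.ext (by rw [he, hσk])
      have h3 := congrArg Fin.val (σ.injective h1)
      have := b.isLt
      simp [hbN] at h3
      omega
    set f2 : Fin (S.erase k).card → {x // x ∈ S.erase k} :=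
      fun b => ⟨(σ ⟨b.1, hblt b⟩ : Fin n), hmem b⟩ with hf2
    have hf2val : ∀ (b : Fin (S.erase k).card) (t : Fin S.card),
        b.1 = t.1 → (f2 b : Fin n) = (σ t : Fin n) := by
      intro b t h
      rw [hf2]
      exact congrArg (fun z => ((σ z : {x // x ∈ S}) : Fin n)) (Fin.ext h)
    have hf2inj : Function.Injective f2 := by
      intro a b hab
      have h1 : (f2 a : Fin n) = (f2 b : Fin n) := by rw [hab]
      rw [hf2val a ⟨a.1, hblt a⟩ rfl, hf2val b ⟨b.1, hblt b⟩ rfl] at h1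
      have h2 := σ.injective (Subtype.ext h1)
      apply Fin.ext
      simpa using h2
    have hf2bij : Function.Bijective f2 := by
      rw [Fintype.bijective_iff_injective_and_card]
      exact ⟨hf2inj, by rw [Fintype.card_fin, Fintype.card_coe]⟩
    refine ⟨((∑ b : Fin (S.erase k).card,
        ∑ a ∈ Finset.Icc (c2 b.castSucc + 1) (c2 b.succ),
          v ((Equiv.ofBijective f2 hf2bij) b) a : ℝ) : EReal),
      Or.inr ⟨(f2 ⟨(S.erase k).card - 1, Nat.sub_lt hM one_pos⟩ : Fin n),
        (f2 ⟨(S.erase k).card - 1, Nat.sub_lt hM one_pos⟩).2,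
        ⟨hM, c2, Equiv.ofBijective f2 hf2bij, ?_, ?_, ?_, rfl, rfl⟩⟩, ?_⟩
    · intro a b hab
      rw [hc2]
      exact hmono (show (⟨a.1, _⟩ : Fin (S.card + 1)) < ⟨b.1, _⟩ from hab)
    · rw [hc2val 0 0 (by simp), h0]
    · rw [hc2val (Fin.last _) bN.castSucc (by simp [hbN]; omega), hcp]
    · rw [← EReal.coe_add]
      congr 1
      conv_lhs => rw [← Equiv.sum_comp (finCongr hMN)
        (fun b => ∑ a ∈ Finset.Icc (c b.castSucc + 1) (c b.succ), v (σ b) a)]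
      rw [Fin.sum_univ_castSucc]
      have e1 : c ((finCongr hMN) (Fin.last (S.erase k).card)).castSucc = j := by
        rw [show ((finCongr hMN) (Fin.last (S.erase k).card)).castSucc = bN.castSucc
          from Fin.ext (by simp [hbN]; omega)]
        exact hcp
      have e2 : c ((finCongr hMN) (Fin.last (S.erase k).card)).succ = j + 1 := by
        rw [show ((finCongr hMN) (Fin.last (S.erase k).card)).succ = Fin.last S.card
          from Fin.ext (by simp; omega)]
        exact hlast
      have e3 : (σ ((finCongr hMN) (Fin.last (S.erase k).card)) : Fin n) = k := by
        rw [show ((finCongr hMN) (Fin.last (S.erase k).card)) = bN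
          from Fin.ext (by simp [hbN]; omega)]
        exact hσk
      rw [e1, e2, e3, Finset.Icc_self, Finset.sum_singleton]
      congr 1

lemma dset_succ (n : ℕ) (v : Fin n → ℕ → ℝ) (j : ℕ) (hj : 1 ≤ j) (S : Finset (Fin n))
    (k : Fin n) (hk : k ∈ S) :
    dset n v (j + 1) S k =
      (fun w => w + ((v k (j + 1) : ℝ) : EReal)) ''
        (dset n v j S k ∪ ⋃ i ∈ S.erase k, dset n v j (S.erase k) i) := by
  ext w
  constructor
  · intro hw
    obtain ⟨w', hw', heq⟩ := mem_analyze n v j hj S k hk hw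
    refine ⟨w', ?_, heq.symm⟩
    rcases hw' with h | ⟨i, hi, h⟩
    · exact Or.inl h
    · exact Or.inr (Set.mem_biUnion hi h)
  · rintro ⟨w', hw', rfl⟩
    rcases hw' with h | h
    · exact mem_extend n v j S k h
    · rcases Set.mem_iUnion₂.mp h with ⟨i, hi, h2⟩
      exact mem_split n v j S k i hk h2

/-- correctness of the dynamic-programming recurrence behind the
FPT-FPTAS for utilitarian welfare (Theorem 4). -/
theorem stmt_5 (n m : ℕ) (hn : 1 ≤ n) (hm : 1 ≤ m)
    (v : Fin n → ℕ → ℝ) (hv : ∀ i j, 0 ≤ v i j) :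
    (∀ (S : Finset (Fin n)) (k : Fin n), S.Nonempty →
      dpU n v 1 S k = if S = {k} then ((v k 1 : ℝ) : EReal) else ⊥) ∧
    (∀ j : ℕ, 1 ≤ j → j < m → ∀ (S : Finset (Fin n)) (k : Fin n),
      S.Nonempty → k ∈ S →
      dpU n v (j + 1) S k =
        max (dpU n v j S k + ((v k (j + 1) : ℝ) : EReal))
          (((S.erase k).sup fun i => dpU n v j (S.erase k) i) +
            ((v k (j + 1) : ℝ) : EReal))) := by
  constructor
  · intro S k _
    exact part1 n v S k
  · intro j hj1 _ S k _ hk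
    simp only [dpU_eq]
    rw [dset_succ n v j hj1 S k hk, sSup_image_add, sSup_union,
      ← sSup_fin_biUnion (S.erase k) (fun i => dset n v j (S.erase k) i),
      ← max_add_coe]
end

section
/- For every ε > 0 there exist points 0 = c_0 < c_1 < ⋯ < c_m = 1 with m ≤ n/ε + 1 such that v_i((c_{j−1}, c_j)) ≤ ε for every player i ∈ {1, …, n} and every 1 ≤ j ≤ m. (Existence and size guarantee of the discretization produced by Algorithm 1, Lemma 1(1).) -/
open MeasureTheory Set Topology

private lemma cdf_mono (μ : Measure ℝ) [IsFiniteMeasure μ] :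
    Monotone fun x => (μ (Iic x)).toReal := fun a b hab =>
  ENNReal.toReal_mono (measure_ne_top _ _) (measure_mono (Iic_subset_Iic.2 hab))

private lemma cdf_cont (μ : Measure ℝ) [IsFiniteMeasure μ] [NullSingletonClass μ] :
    Continuous fun x => (μ (Iic x)).toReal := by
  set f : ℝ → ℝ := fun x => (μ (Iic x)).toReal with hf
  have hmono : Monotone f := cdf_mono μ
  rw [continuous_iff_continuousAt]
  intro x
  rw [Metric.continuousAt_iff]
  intro ε hε
  have hinter : (⋂ k : ℕ, Ioc (x - 1/(k+1)) (x + 1/(k+1))) = {x} := by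
    ext y
    simp only [mem_iInter, mem_Ioc, mem_singleton_iff]
    constructor
    · intro h
      have hle : y ≤ x := by
        by_contra hlt
        push_neg at hlt
        obtain ⟨k, hk⟩ := exists_nat_one_div_lt (sub_pos.2 hlt)
        have := (h k).2
        linarith
      have hge : x ≤ y := by
        by_contra hlt
        push_neg at hlt
        obtain ⟨k, hk⟩ := exists_nat_one_div_lt (sub_pos.2 hlt)
        have := (h k).1
        linarith
      exact le_antisymm hle hge
    · rintro rfl k
      have : (0:ℝ) < 1/(k+1) := by positivity
      constructor <;> linarith
  have hti : Filter.Tendsto (fun k : ℕ => μ (Ioc (x - 1/(k+1)) (x + 1/(k+1))))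
      Filter.atTop (𝓝 (μ (⋂ k : ℕ, Ioc (x - 1/(k+1)) (x + 1/(k+1))))) := by
    apply tendsto_measure_iInter_atTop
      (fun k => measurableSet_Ioc.nullMeasurableSet) ?_ ⟨0, measure_ne_top _ _⟩
    intro k l hkl
    have h1 : (1:ℝ)/(l+1) ≤ 1/(k+1) := by
      apply one_div_le_one_div_of_le (by positivity)
      exact_mod_cast by exact_mod_cast add_le_add_left (Nat.cast_le.2 hkl) 1
    apply Ioc_subset_Ioc <;> linarith
  rw [hinter, measure_singleton] at hti
  have hev : ∀ᶠ k : ℕ in Filter.atTop,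
      μ (Ioc (x - 1/(k+1)) (x + 1/(k+1))) < ENNReal.ofReal ε :=
    hti.eventually_lt_const (ENNReal.ofReal_pos.2 hε)
  obtain ⟨k, hk⟩ := hev.exists
  set u : ℝ := 1/(k+1) with hu
  have hu0 : 0 < u := by positivity
  refine ⟨u, hu0, fun {y} hy => ?_⟩
  rw [Real.dist_eq] at hy ⊢
  have hy1 : y ≤ x + u := by rw [abs_lt] at hy; linarith [hy.2]
  have hy2 : x - u ≤ y := by rw [abs_lt] at hy; linarith [hy.1]
  have hsplit : f (x + u) - f (x - u) = (μ (Ioc (x - u) (x + u))).toReal := by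
    have hle : x - u ≤ x + u := by linarith
    have := Iic_union_Ioc_eq_Iic hle
    have hmeas : μ (Iic (x + u)) = μ (Iic (x - u)) + μ (Ioc (x - u) (x + u)) := by
      rw [← this, measure_union _ measurableSet_Ioc]
      rw [Set.disjoint_left]
      intro a ha ha'
      exact absurd ha'.1 (not_lt.2 ha)
    simp only [hf, hmeas, ENNReal.toReal_add (measure_ne_top _ _) (measure_ne_top _ _)]
    ring
  have hlt : (μ (Ioc (x - u) (x + u))).toReal < ε := ENNReal.toReal_lt_of_lt_ofReal hk
  have h1 : f y ≤ f (x + u) := hmono hy1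
  have h2 : f (x - u) ≤ f y := hmono hy2
  have h3 : f x ≤ f (x + u) := hmono (by linarith)
  have h4 : f (x - u) ≤ f x := hmono (by linarith)
  rw [abs_lt]
  constructor <;> linarith

/-- the discretization of Algorithm 1 exists (Lemma 1(1)):
for every `ε > 0` there are points `0 = c_0 < c_1 < ⋯ < c_m = 1` with
`m ≤ n/ε + 1` such that every player values every resulting interval at
most `ε`. -/
theorem stmt_8 (n : ℕ) (hn : 0 < n) (v : Fin n → Measure ℝ)
    (hatomless : ∀ i, NoAtoms (v i))
    (hprob : ∀ i, v i (Icc 0 1) = 1) (hsupp : ∀ i, v i (Icc (0 : ℝ) 1)ᶜ = 0)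
    (ε : ℝ) (hε : 0 < ε) :
    ∃ (m : ℕ) (c : Fin (m + 1) → ℝ),
      StrictMono c ∧ c 0 = 0 ∧ c (Fin.last m) = 1 ∧ (m : ℝ) ≤ n / ε + 1 ∧
      ∀ (i : Fin n) (j : Fin m),
        v i (Ioo (c j.castSucc) (c j.succ)) ≤ ENNReal.ofReal ε := by
  haveI : ∀ i, NullSingletonClass (v i) := hatomless
  have huniv : ∀ i, v i univ ≤ 1 := by
    intro i
    calc v i univ ≤ v i (Icc 0 1) + v i (Icc (0:ℝ) 1)ᶜ := measure_univ_le_add_compl _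
    _ = 1 := by rw [hprob i, hsupp i, add_zero]
  haveI hfin : ∀ i, IsFiniteMeasure (v i) := fun i =>
    ⟨lt_of_le_of_lt (huniv i) ENNReal.one_lt_top⟩
  set f : Fin n → ℝ → ℝ := fun i x => (v i (Iic x)).toReal with hfdef
  set F : ℝ → ℝ := fun x => ∑ i, f i x with hFdef
  have hFcont : Continuous F := continuous_finset_sum _ fun i _ => cdf_cont (v i)
  have hFmono : Monotone F := fun a b hab =>
    Finset.sum_le_sum fun i _ => cdf_mono (v i) hab
  have hf0 : ∀ i, f i 0 = 0 := by
    intro i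
    have : v i (Iic (0:ℝ)) = 0 := by
      have hsub : Iic (0:ℝ) ⊆ {0} ∪ (Icc (0:ℝ) 1)ᶜ := by
        intro x hx
        rcases eq_or_lt_of_le (mem_Iic.1 hx) with h | h
        · exact Or.inl h
        · exact Or.inr (by simp [mem_Icc]; intro h'; linarith)
      have := (measure_mono (μ := v i) hsub).trans (measure_union_le _ _)
      rw [measure_singleton, hsupp i, add_zero] at this
      exact le_antisymm this zero_le
    simp [hfdef, this]
  have hf1 : ∀ i, f i 1 = 1 := by
    intro i
    have hle : v i (Iic (1:ℝ)) ≤ 1 := (measure_mono (subset_univ _)).trans (huniv i)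
    have hge : (1 : ENNReal) ≤ v i (Iic 1) := by
      rw [← hprob i]
      exact measure_mono (Icc_subset_Iic_self (a := (0:ℝ)) (b := 1))
    have : v i (Iic (1:ℝ)) = 1 := le_antisymm hle hge
    simp [hfdef, this]
  have hF0 : F 0 = 0 := by simp [hFdef, hf0]
  have hF1 : F 1 = n := by simp [hFdef, hf1]
  set m : ℕ := ⌈(n:ℝ)/ε⌉₊ with hmdef
  have hnε : (0:ℝ) < n/ε := div_pos (by exact_mod_cast hn) hε
  have hm0 : 0 < m := Nat.ceil_pos.2 hnε
  have hmR : (0:ℝ) < m := by exact_mod_cast hm0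
  set δ : ℝ := n / m with hδdef
  have hδ0 : 0 < δ := div_pos (by exact_mod_cast hn) hmR
  have hmδ : (m:ℝ) * δ = n := by
    rw [hδdef]; field_simp
  have hδε : δ ≤ ε := by
    rw [hδdef, div_le_iff₀ hmR]
    have h1 : (n:ℝ)/ε ≤ m := Nat.le_ceil _
    calc (n:ℝ) = ε * ((n:ℝ)/ε) := by field_simp
    _ ≤ ε * m := by nlinarith
  have hmbound : (m:ℝ) ≤ n/ε + 1 := by
    have := Nat.ceil_lt_add_one (le_of_lt hnε)
    linarith
  -- the set and its infimum
  set S : ℕ → Set ℝ := fun j => {x | x ∈ Icc (0:ℝ) 1 ∧ (j:ℝ) * δ ≤ F x} with hSdef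
  set g : ℕ → ℝ := fun j => sInf (S j) with hgdef
  have hSclosed : ∀ j, IsClosed (S j) := by
    intro j
    exact (isClosed_Icc.inter (isClosed_le continuous_const hFcont))
  have hSne : ∀ j ≤ m, (S j).Nonempty := by
    intro j hj
    refine ⟨1, ⟨by norm_num, by norm_num⟩, ?_⟩
    rw [hF1, ← hmδ]
    have : (j:ℝ) ≤ m := by exact_mod_cast hj
    nlinarith
  have hSbdd : ∀ j, BddBelow (S j) := fun j => ⟨0, fun x hx => hx.1.1⟩
  have hgmem : ∀ j ≤ m, g j ∈ S j := fun j hj =>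
    IsClosed.csInf_mem (hSclosed j) (hSne j hj) (hSbdd j)
  have hgval : ∀ j ≤ m, F (g j) = (j:ℝ) * δ := by
    intro j hj
    obtain ⟨⟨hg0, hg1⟩, hgF⟩ := hgmem j hj
    have hIVT := intermediate_value_Icc hg0 (hFcont.continuousOn (s := Icc 0 (g j)))
    have hmem : (j:ℝ) * δ ∈ Icc (F 0) (F (g j)) := by
      rw [hF0]
      exact ⟨by positivity, hgF⟩
    obtain ⟨x, hx, hxF⟩ := hIVT hmem
    have hxS : x ∈ S j := ⟨⟨hx.1, hx.2.trans hg1⟩, hxF.ge⟩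
    have hgx : g j ≤ x := csInf_le (hSbdd j) hxS
    have : x = g j := le_antisymm hx.2 hgx
    rw [← this, hxF]
  have hgsm : ∀ j k, j < k → k ≤ m → g j < g k := by
    intro j k hjk hk
    have h1 : F (g j) = (j:ℝ) * δ := hgval j (le_of_lt (lt_of_lt_of_le hjk hk))
    have h2 : F (g k) = (k:ℝ) * δ := hgval k hk
    by_contra h
    push_neg at h
    have := hFmono h
    rw [h1, h2] at this
    have hjk' : (j:ℝ) < k := by exact_mod_cast hjk
    nlinarith
  have hglt1 : ∀ j < m, g j < 1 := by
    intro j hj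
    obtain ⟨⟨hg0, hg1⟩, _⟩ := hgmem j (le_of_lt hj)
    rcases eq_or_lt_of_le hg1 with h | h
    · exfalso
      have := hgval j (le_of_lt hj)
      rw [h, hF1] at this
      have hjm : (j:ℝ) < m := by exact_mod_cast hj
      nlinarith
    · exact h
  have hg0eq : g 0 = 0 := by
    have h0S : (0:ℝ) ∈ S 0 := ⟨⟨le_refl _, by norm_num⟩, by simp [hF0]⟩
    have := csInf_le (hSbdd 0) h0S
    have h2 := (hgmem 0 (le_of_lt hm0)).1.1
    exact le_antisymm this h2
  -- define c
  refine ⟨m, fun j => if (j:ℕ) = m then 1 else g j, ?_, ?_, ?_, hmbound, ?_⟩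
  · intro j k hjk
    have hjk' : (j:ℕ) < (k:ℕ) := hjk
    have hjm : (j:ℕ) < m := lt_of_lt_of_le hjk' (Nat.lt_succ_iff.1 k.isLt)
    show (if (j:ℕ) = m then (1:ℝ) else g j) < (if (k:ℕ) = m then (1:ℝ) else g k)
    rw [if_neg (Nat.ne_of_lt hjm)]
    by_cases hk : (k:ℕ) = m
    · rw [if_pos hk]; exact hglt1 _ hjm
    · rw [if_neg hk]
      exact hgsm _ _ hjk' (Nat.lt_succ_iff.1 k.isLt)
  · show (if ((0 : Fin (m+1)):ℕ) = m then (1:ℝ) else g ((0 : Fin (m+1)):ℕ)) = 0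
    rw [show ((0 : Fin (m+1)):ℕ) = 0 from rfl, if_neg (Nat.ne_of_lt hm0)]
    exact hg0eq
  · simp [Fin.val_last]
  · intro i j
    set a : ℝ := if ((j.castSucc : Fin (m+1)) : ℕ) = m then 1 else g j.castSucc with ha
    set b : ℝ := if ((j.succ : Fin (m+1)) : ℕ) = m then 1 else g j.succ with hb
    have hjm : (j:ℕ) < m := j.isLt
    have hacast : ((j.castSucc : Fin (m+1)) : ℕ) = (j:ℕ) := rfl
    have hbcast : ((j.succ : Fin (m+1)) : ℕ) = (j:ℕ) + 1 := rfl
    have haeq : a = g j := by rw [ha, hacast, if_neg (Nat.ne_of_lt hjm)]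
    have hFa : F a = (j:ℝ) * δ := by rw [haeq]; exact hgval _ (le_of_lt hjm)
    have hFb : F b = ((j:ℝ) + 1) * δ := by
      rw [hb, hbcast]
      by_cases h : (j:ℕ) + 1 = m
      · rw [if_pos h, hF1]
        have hc : ((j:ℕ):ℝ) + 1 = (m:ℝ) := by exact_mod_cast congrArg (Nat.cast (R := ℝ)) h
        rw [hc]
        exact hmδ.symm
      · rw [if_neg h]
        have := hgval ((j:ℕ)+1) (by omega)
        rw [this]
        push_cast
        ring
    have hab : a ≤ b := by
      have hFab : F b - F a = δ := by rw [hFa, hFb]; ring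
      by_contra h
      push_neg at h
      have := hFmono h.le
      nlinarith
    -- key: v i (Ioo a b) ≤ δ
    have hkey : (v i (Ioo a b)).toReal ≤ δ := by
      have hsub : Iic a ∪ Ioo a b ⊆ Iic b := by
        rintro x (hx | hx)
        · exact le_trans hx hab
        · exact le_of_lt hx.2
      have hdisj : Disjoint (Iic a) (Ioo a b) := by
        rw [Set.disjoint_left]
        intro x hx hx'
        exact absurd hx'.1 (not_lt.2 hx)
      have hum : v i (Iic a ∪ Ioo a b) = v i (Iic a) + v i (Ioo a b) :=
        measure_union hdisj measurableSet_Ioo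
      have hle : v i (Iic a) + v i (Ioo a b) ≤ v i (Iic b) := by
        rw [← hum]; exact measure_mono hsub
      have hle' : f i a + (v i (Ioo a b)).toReal ≤ f i b := by
        have := ENNReal.toReal_mono (measure_ne_top _ _) hle
        rwa [ENNReal.toReal_add (measure_ne_top _ _) (measure_ne_top _ _)] at this
      have hstep : f i b - f i a ≤ F b - F a := by
        have hsum : F b - F a = ∑ k, (f k b - f k a) := by
          rw [hFdef, Finset.sum_sub_distrib]
        rw [hsum]
        refine Finset.single_le_sum (f := fun k => f k b - f k a) ?_ (Finset.mem_univ i)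
        intro k _
        have hmk : f k a ≤ f k b := cdf_mono (v k) hab
        simpa using hmk
      have hFab : F b - F a = δ := by rw [hFa, hFb]; ring
      linarith
    rw [ENNReal.le_ofReal_iff_toReal_le (measure_ne_top _ _) (le_of_lt hε)]
    linarith
end

section
/- Let ε > 0 and let 0 = c_0 < c_1 < ⋯ < c_m = 1 be points such that for every 1 ≤ j ≤ m − 1 there exists a player i with v_i((c_{j−1}, c_j)) ≥ ε. Then m ≤ n/ε + 1. (Bound on the number of iterations of the discretization procedure, Lemma 1(1).) -/
open MeasureTheory Set
open scoped ENNReal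

/-- bound on the number of iterations of the discretization
procedure (Lemma 1(1)): if `0 = c_0 < ⋯ < c_m = 1` and each interval
`(c_{j-1}, c_j)` with `1 ≤ j ≤ m - 1` is worth at least `ε` to some player,
then `m ≤ n/ε + 1`. -/
theorem stmt_9 (n m : ℕ) (v : Fin n → Measure ℝ)
    (hatomless : ∀ i, NoAtoms (v i))
    (hprob : ∀ i, v i (Icc 0 1) = 1) (hsupp : ∀ i, v i (Icc (0 : ℝ) 1)ᶜ = 0)
    (ε : ℝ) (hε : 0 < ε) (c : Fin (m + 1) → ℝ)
    (hc : StrictMono c) (h0 : c 0 = 0) (h1 : c (Fin.last m) = 1)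
    (h : ∀ j : Fin m, (j : ℕ) + 1 < m →
      ∃ i, ENNReal.ofReal ε ≤ v i (Ioo (c j.castSucc) (c j.succ))) :
    (m : ℝ) ≤ n / ε + 1 := by
  rcases Nat.eq_zero_or_pos m with hm | hm
  · subst hm
    simp only [Nat.cast_zero]
    positivity
  -- total measure of each player is 1
  have hv1 : ∀ i, v i Set.univ = 1 := by
    intro i
    have := measure_add_measure_compl (μ := v i) (s := Icc (0:ℝ) 1) measurableSet_Icc
    rw [hprob, hsupp, add_zero] at this
    exact this.symm
  set S : Finset (Fin m) := Finset.univ.filter (fun j => (j : ℕ) + 1 < m) with hS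
  have hlt : m - 1 < m := Nat.sub_lt hm one_pos
  have hcard : S.card = m - 1 := by
    have hSe : S = Finset.univ.erase ⟨m - 1, hlt⟩ := by
      ext j
      have hj := j.isLt
      simp only [hS, Finset.mem_filter, Finset.mem_univ, true_and, Finset.mem_erase,
        and_true]
      constructor
      · intro hlt' heq
        have : (j : ℕ) = m - 1 := by rw [heq]
        omega
      · intro hne
        by_contra hle
        push_neg at hle
        exact hne (Fin.ext (show (j : ℕ) = m - 1 by omega))
    rw [hSe, Finset.card_erase_of_mem (Finset.mem_univ _), Finset.card_univ,
      Fintype.card_fin]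
  -- each selected interval contributes ε to the total sum over players
  have step1 : ∀ j ∈ S, ENNReal.ofReal ε ≤ ∑ i, v i (Ioo (c j.castSucc) (c j.succ)) := by
    intro j hj
    rw [hS, Finset.mem_filter] at hj
    obtain ⟨i, hi⟩ := h j hj.2
    exact hi.trans (Finset.single_le_sum
      (f := fun i => v i (Ioo (c j.castSucc) (c j.succ)))
      (fun _ _ => zero_le) (Finset.mem_univ i))
  have hmono : ∀ (j k : Fin m), j < k → c j.succ ≤ c k.castSucc := by
    intro j k hjk
    apply hc.monotone
    rw [Fin.le_def]
    simpa using hjk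
  -- intervals are pairwise disjoint
  have hdisj : ((Finset.univ : Finset (Fin m)) : Set (Fin m)).PairwiseDisjoint
      (fun j : Fin m => Ioo (c j.castSucc) (c j.succ)) := by
    intro j _ k _ hjk
    rcases hjk.lt_or_gt with hlt' | hlt'
    · exact Set.Ioo_disjoint_Ioo.2
        ((min_le_left _ _).trans ((hmono j k hlt').trans (le_max_right _ _)))
    · exact Set.Ioo_disjoint_Ioo.2
        ((min_le_right _ _).trans ((hmono k j hlt').trans (le_max_left _ _)))
  -- for each player the sum over disjoint intervals is at most 1
  have step3 : ∀ i, ∑ j ∈ S, v i (Ioo (c j.castSucc) (c j.succ)) ≤ 1 := by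
    intro i
    have hdisjS : (S : Set (Fin m)).PairwiseDisjoint
        (fun j : Fin m => Ioo (c j.castSucc) (c j.succ)) :=
      hdisj.subset (by simp)
    rw [← measure_biUnion_finset hdisjS (fun _ _ => measurableSet_Ioo)]
    calc v i (⋃ j ∈ S, Ioo (c j.castSucc) (c j.succ)) ≤ v i Set.univ :=
          measure_mono (Set.subset_univ _)
      _ = 1 := hv1 i
  have key : (↑(m - 1) : ℝ≥0∞) * ENNReal.ofReal ε ≤ (n : ℝ≥0∞) := by
    calc (↑(m - 1) : ℝ≥0∞) * ENNReal.ofReal ε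
        = ∑ _j ∈ S, ENNReal.ofReal ε := by
          rw [Finset.sum_const, hcard, nsmul_eq_mul]
      _ ≤ ∑ j ∈ S, ∑ i, v i (Ioo (c j.castSucc) (c j.succ)) :=
          Finset.sum_le_sum step1
      _ = ∑ i, ∑ j ∈ S, v i (Ioo (c j.castSucc) (c j.succ)) := Finset.sum_comm
      _ ≤ ∑ _i : Fin n, (1 : ℝ≥0∞) := Finset.sum_le_sum (fun i _ => step3 i)
      _ = (n : ℝ≥0∞) := by simp
  -- convert to real numbers
  have keyR : ((m - 1 : ℕ) : ℝ) * ε ≤ n := by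
    have h1' : (↑(m - 1) : ℝ≥0∞) * ENNReal.ofReal ε
        = ENNReal.ofReal (((m - 1 : ℕ) : ℝ) * ε) := by
      rw [ENNReal.ofReal_mul (by positivity), ENNReal.ofReal_natCast]
    have h2' : (n : ℝ≥0∞) = ENNReal.ofReal (n : ℝ) := by
      rw [ENNReal.ofReal_natCast]
    rw [h1', h2', ENNReal.ofReal_le_ofReal_iff (by positivity)] at key
    exact key
  rw [Nat.cast_sub hm, Nat.cast_one] at keyR
  have : (m : ℝ) - 1 ≤ (n : ℝ) / ε := by
    rw [le_div_iff₀ hε]; linarith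
  linarith
end

section
/- Let ε > 0 and let C ⊆ [0,1] be a finite set containing 0 and 1 such that for every two consecutive points c' < c'' of C and every player i, v_i((c', c'')) ≤ ε. Then for every connected division x there exists a connected division y, all of whose cut points belong to C and with the same assignment permutation as x, such that u(y) ≥ u(x) − (n−1)ε. (Lemma 1(2): restricting cuts to the discretization points loses at most (n−1)ε utilitarian welfare.) -/
open MeasureTheory Set

/-- Lemma 1(2): if `C ⊆ [0,1]` is a finite set of cut positions
containing `0` and `1` such that every player values the interval between any
two consecutive points of `C` at most `ε`, then any connected division `x` can
be rounded to a division `y` cutting only at points of `C` (with the same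
assignment permutation) while losing at most `(n-1)ε` utilitarian welfare. -/
theorem stmt_10 (n : ℕ) (hn : 0 < n) (v : Fin n → Measure ℝ)
    (hatomless : ∀ i, NoAtoms (v i))
    (hprob : ∀ i, v i (Icc 0 1) = 1) (hsupp : ∀ i, v i (Icc (0 : ℝ) 1)ᶜ = 0)
    (ε : ℝ) (hε : 0 < ε) (C : Finset ℝ)
    (hC0 : (0 : ℝ) ∈ C) (hC1 : (1 : ℝ) ∈ C) (hCsub : ↑C ⊆ Icc (0 : ℝ) 1)
    (hgap : ∀ c' ∈ C, ∀ c'' ∈ C, c' < c'' → (∀ c ∈ C, c ≤ c' ∨ c'' ≤ c) →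
      ∀ i, v i (Ioo c' c'') ≤ ENNReal.ofReal ε)
    (x : Fin (n + 1) → ℝ) (hx : Monotone x) (hx0 : x 0 = 0)
    (hx1 : x (Fin.last n) = 1) (π : Equiv.Perm (Fin n)) :
    ∃ y : Fin (n + 1) → ℝ,
      Monotone y ∧ y 0 = 0 ∧ y (Fin.last n) = 1 ∧ (∀ j, y j ∈ C) ∧
      (∑ i, (v i (Ioo (x (π.symm i).castSucc) (x (π.symm i).succ))).toReal)
          - (n - 1) * ε ≤
        ∑ i, (v i (Ioo (y (π.symm i).castSucc) (y (π.symm i).succ))).toReal := by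
  classical
  have hxle1 : ∀ j, x j ≤ 1 := fun j => hx1 ▸ hx (Fin.le_last j)
  have hx0le : ∀ j, (0:ℝ) ≤ x j := fun j => hx0 ▸ hx (Fin.zero_le j)
  -- finiteness
  have hfin : ∀ i (s : Set ℝ), v i s ≠ ⊤ := by
    intro i s
    have huniv : v i Set.univ = 1 := by
      have h := measure_add_measure_compl (μ := v i)
        (measurableSet_Icc : MeasurableSet (Icc (0:ℝ) 1))
      rw [hprob i, hsupp i] at h
      simpa using h.symm
    exact ne_of_lt (lt_of_le_of_lt (measure_mono (subset_univ s))
      (by rw [huniv]; exact ENNReal.one_lt_top))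
  -- definition of y
  have hne : ∀ j : Fin (n+1), (C.filter (fun c => c ≤ x j)).Nonempty :=
    fun j => ⟨0, Finset.mem_filter.2 ⟨hC0, hx0le j⟩⟩
  set y : Fin (n+1) → ℝ := fun j => (C.filter (fun c => c ≤ x j)).max' (hne j) with hy
  have hymem : ∀ j, y j ∈ C := fun j =>
    (Finset.mem_filter.1 (Finset.max'_mem _ (hne j))).1
  have hyle : ∀ j, y j ≤ x j := fun j =>
    (Finset.mem_filter.1 (Finset.max'_mem _ (hne j))).2
  have hymax : ∀ j, ∀ c ∈ C, c ≤ x j → c ≤ y j := fun j c hc hcx =>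
    Finset.le_max' (C.filter (fun c => c ≤ x j)) c (Finset.mem_filter.2 ⟨hc, hcx⟩)
  have hymono : Monotone y := by
    intro j k hjk
    exact hymax k (y j) (hymem j) (le_trans (hyle j) (hx hjk))
  have hy0 : y 0 = 0 := le_antisymm (by simpa [hx0] using hyle 0)
    (hymax 0 0 hC0 (by rw [hx0]))
  have hylast : y (Fin.last n) = 1 := le_antisymm
    ((hCsub (hymem _)).2) (hymax (Fin.last n) 1 hC1 (by rw [hx1]))
  -- key per-interval estimate
  have key : ∀ (j : Fin n) (i : Fin n),
      (v i (Ioo (x j.castSucc) (x j.succ))).toReal ≤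
      (v i (Ioo (y j.castSucc) (y j.succ))).toReal
        + (if (j:ℕ)+1 = n then 0 else ε) := by
    intro j i
    haveI := hatomless i
    by_cases hj : (j:ℕ)+1 = n
    · rw [if_pos hj, add_zero]
      have hlast : j.succ = Fin.last n := by
        ext; simpa using hj
      rw [hlast, hx1, hylast]
      exact ENNReal.toReal_mono (hfin i _)
        (measure_mono (Ioo_subset_Ioo_left (hyle _)))
    · rw [if_neg hj]
      set a := x j.castSucc
      set b := x j.succ
      set a' := y j.castSucc
      set b' := y j.succ
      have hab : a' ≤ a := hyle _
      have hbb : b' ≤ b := hyle _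
      have hIoob : v i (Ioo b' b) ≤ ENNReal.ofReal ε := by
        rcases eq_or_lt_of_le hbb with h | h
        · simp [h]
        · have hb'1 : b' < 1 := lt_of_lt_of_le h (hxle1 _)
          have hSne : (C.filter (fun c => b' < c)).Nonempty :=
            ⟨1, Finset.mem_filter.2 ⟨hC1, hb'1⟩⟩
          set c'' := (C.filter (fun c => b' < c)).min' hSne with hc''def
          have hc''mem : c'' ∈ C := (Finset.mem_filter.1 (Finset.min'_mem _ hSne)).1
          have hb'c : b' < c'' := (Finset.mem_filter.1 (Finset.min'_mem _ hSne)).2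
          have hcons : ∀ c ∈ C, c ≤ b' ∨ c'' ≤ c := by
            intro c hc
            by_cases hcb : c ≤ b'
            · exact Or.inl hcb
            · exact Or.inr (Finset.min'_le _ c
                (Finset.mem_filter.2 ⟨hc, lt_of_not_ge hcb⟩))
          have hbc : b ≤ c'' := by
            by_contra hbc
            push_neg at hbc
            exact absurd (hymax j.succ c'' hc''mem hbc.le) (not_le.2 hb'c)
          calc v i (Ioo b' b) ≤ v i (Ioo b' c'') :=
                measure_mono (Ioo_subset_Ioo_right hbc)
            _ ≤ ENNReal.ofReal ε := hgap b' (hymem _) c'' hc''mem hb'c hcons i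
      have hsub : Ioo a b ⊆ Ioo a' b' ∪ Ico b' b := by
        intro t ht
        rcases lt_or_ge t b' with h | h
        · exact Or.inl ⟨lt_of_le_of_lt hab ht.1, h⟩
        · exact Or.inr ⟨h, ht.2⟩
      have hIco : v i (Ico b' b) ≤ v i (Ioo b' b) := by
        have hsub2 : Ico b' b ⊆ {b'} ∪ Ioo b' b := by
          intro t ht
          rcases eq_or_lt_of_le ht.1 with h | h
          · exact Or.inl h.symm
          · exact Or.inr ⟨h, ht.2⟩
        calc v i (Ico b' b) ≤ v i ({b'} ∪ Ioo b' b) := measure_mono hsub2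
          _ ≤ v i {b'} + v i (Ioo b' b) := measure_union_le _ _
          _ = v i (Ioo b' b) := by haveI : NullSingletonClass (v i) := hatomless i; rw [measure_singleton, zero_add]
      have hle : v i (Ioo a b) ≤ v i (Ioo a' b') + ENNReal.ofReal ε := by
        calc v i (Ioo a b) ≤ v i (Ioo a' b' ∪ Ico b' b) := measure_mono hsub
          _ ≤ v i (Ioo a' b') + v i (Ico b' b) := measure_union_le _ _
          _ ≤ v i (Ioo a' b') + ENNReal.ofReal ε :=
              add_le_add_right (le_trans hIco hIoob) _
      have hfin' : v i (Ioo a' b') + ENNReal.ofReal ε ≠ ⊤ :=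
        ENNReal.add_ne_top.2 ⟨hfin i _, ENNReal.ofReal_ne_top⟩
      have h2 := ENNReal.toReal_mono hfin' hle
      rwa [ENNReal.toReal_add (hfin i _) ENNReal.ofReal_ne_top,
        ENNReal.toReal_ofReal hε.le] at h2
  refine ⟨y, hymono, hy0, hylast, hymem, ?_⟩
  have hre : ∀ (z : Fin (n+1) → ℝ),
      ∑ i, (v i (Ioo (z (π.symm i).castSucc) (z (π.symm i).succ))).toReal
        = ∑ j, (v (π j) (Ioo (z j.castSucc) (z j.succ))).toReal := by
    intro z
    rw [← Equiv.sum_comp π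
      (fun i => (v i (Ioo (z (π.symm i).castSucc) (z (π.symm i).succ))).toReal)]
    simp
  rw [hre x, hre y]
  have hsum : (∑ j : Fin n, (if (j:ℕ)+1 = n then (0:ℝ) else ε)) = ((n:ℝ)-1)*ε := by
    have h0 : ∀ j : Fin n, (if (j:ℕ)+1 = n then (0:ℝ) else ε)
        = ε - (if j = (⟨n-1, by omega⟩ : Fin n) then ε else 0) := by
      intro j
      by_cases h : (j:ℕ)+1 = n
      · rw [if_pos h, if_pos (Fin.ext (by simp; omega))]; ring
      · rw [if_neg h, if_neg (fun hh => h (by rw [hh]; simp; omega))]; ring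
    rw [Finset.sum_congr rfl (fun j _ => h0 j), Finset.sum_sub_distrib,
      Finset.sum_const, Finset.sum_ite_eq']
    simp [Finset.card_univ]
    ring
  have hstep : ∑ j : Fin n, (v (π j) (Ioo (x j.castSucc) (x j.succ))).toReal ≤
      (∑ j : Fin n, (v (π j) (Ioo (y j.castSucc) (y j.succ))).toReal)
        + (∑ j : Fin n, (if (j:ℕ)+1 = n then (0:ℝ) else ε)) := by
    rw [← Finset.sum_add_distrib]
    exact Finset.sum_le_sum (fun j _ => key j (π j))
  rw [hsum] at hstep
  linarith
end

section
/- Let ε > 0 and let C ⊆ [0,1] be a finite set containing 0 and 1 such that for every two consecutive points c' < c'' of C and every player i, v_i((c', c'')) ≤ ε. Then for every connected division x there exists a connected division y, all of whose cut points belong to C and with the same assignment permutation as x, such that eg(y) ≥ eg(x) − ε. (Egalitarian analogue of Lemma 1(2), as noted in the paper.) -/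
open MeasureTheory Set

/-- egalitarian analogue of Lemma 1(2): if `C ⊆ [0,1]` is a
finite set of cut positions containing `0` and `1` such that every player
values the interval between any two consecutive points of `C` at most `ε`,
then any connected division `x` can be rounded to a division `y` cutting only
at points of `C` (with the same assignment permutation) while losing at most
`ε` egalitarian welfare. -/
theorem stmt_11 (n : ℕ) (hn : 0 < n) (v : Fin n → Measure ℝ)
    (hatomless : ∀ i, NoAtoms (v i))
    (hprob : ∀ i, v i (Icc 0 1) = 1) (hsupp : ∀ i, v i (Icc (0 : ℝ) 1)ᶜ = 0)
    (ε : ℝ) (hε : 0 < ε) (C : Finset ℝ)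
    (hC0 : (0 : ℝ) ∈ C) (hC1 : (1 : ℝ) ∈ C) (hCsub : ↑C ⊆ Icc (0 : ℝ) 1)
    (hgap : ∀ c' ∈ C, ∀ c'' ∈ C, c' < c'' → (∀ c ∈ C, c ≤ c' ∨ c'' ≤ c) →
      ∀ i, v i (Ioo c' c'') ≤ ENNReal.ofReal ε)
    (x : Fin (n + 1) → ℝ) (hx : Monotone x) (hx0 : x 0 = 0)
    (hx1 : x (Fin.last n) = 1) (π : Equiv.Perm (Fin n)) :
    ∃ y : Fin (n + 1) → ℝ,
      Monotone y ∧ y 0 = 0 ∧ y (Fin.last n) = 1 ∧ (∀ j, y j ∈ C) ∧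
      (⨅ i, (v i (Ioo (x (π.symm i).castSucc) (x (π.symm i).succ))).toReal) - ε ≤
        ⨅ i, (v i (Ioo (y (π.symm i).castSucc) (y (π.symm i).succ))).toReal := by
  classical
  have hx0' : ∀ j, 0 ≤ x j := fun j => hx0 ▸ hx (Fin.zero_le j)
  have hx1' : ∀ j, x j ≤ 1 := fun j => hx1 ▸ hx (Fin.le_last j)
  have hne : ∀ j, ((C.filter (fun c => c ≤ x j)).Nonempty) := by
    intro j; exact ⟨0, Finset.mem_filter.2 ⟨hC0, hx0' j⟩⟩
  set y : Fin (n + 1) → ℝ := fun j => (C.filter (fun c => c ≤ x j)).max' (hne j) with hy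
  have hyC : ∀ j, y j ∈ C := fun j =>
    (Finset.mem_filter.1 ((C.filter (fun c => c ≤ x j)).max'_mem (hne j))).1
  have hyle : ∀ j, y j ≤ x j := fun j =>
    (Finset.mem_filter.1 ((C.filter (fun c => c ≤ x j)).max'_mem (hne j))).2
  have hmaxle : ∀ j, ∀ c ∈ C, c ≤ x j → c ≤ y j := fun j d hd hdx =>
    Finset.le_max' (C.filter (fun c => c ≤ x j)) d (Finset.mem_filter.2 ⟨hd, hdx⟩)
  have hmono : Monotone y := by
    intro j k hjk
    exact hmaxle k (y j) (hyC j) (le_trans (hyle j) (hx hjk))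
  have hy0 : y 0 = 0 := le_antisymm (hx0 ▸ hyle 0) ((hCsub (hyC 0)).1)
  have hylast : y (Fin.last n) = 1 :=
    le_antisymm ((hCsub (hyC (Fin.last n))).2) (hmaxle _ 1 hC1 (le_of_eq hx1.symm))
  -- finiteness
  have hfin : ∀ i (s : Set ℝ), v i s ≠ ⊤ := by
    intro i s
    have h1 : v i s ≤ v i univ := measure_mono (subset_univ s)
    have h2 : v i univ ≤ v i (Icc 0 1) + v i (Icc (0:ℝ) 1)ᶜ := by
      rw [← union_compl_self (Icc (0:ℝ) 1)]; exact measure_union_le _ _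
    rw [hprob i, hsupp i, add_zero] at h2
    exact ne_top_of_le_ne_top (by simp) (h1.trans h2)
  -- key rounding error bound
  have hkey : ∀ j i, v i (Ioo (y j) (x j)) ≤ ENNReal.ofReal ε := by
    intro j i
    rcases eq_or_lt_of_le (hyle j) with h | h
    · simp [h]
    · have hlt1 : y j < 1 := lt_of_lt_of_le h (hx1' j)
      have hne2 : ((C.filter (fun c => y j < c)).Nonempty) :=
        ⟨1, Finset.mem_filter.2 ⟨hC1, hlt1⟩⟩
      set b'' := (C.filter (fun c => y j < c)).min' hne2 with hb''
      have hb''C : b'' ∈ C := (Finset.mem_filter.1 ((C.filter _).min'_mem hne2)).1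
      have hb''gt : y j < b'' := (Finset.mem_filter.1 ((C.filter _).min'_mem hne2)).2
      have hcons : ∀ c ∈ C, c ≤ y j ∨ b'' ≤ c := by
        intro c hc
        rcases le_or_gt c (y j) with hle | hgt
        · exact Or.inl hle
        · exact Or.inr (Finset.min'_le _ c (Finset.mem_filter.2 ⟨hc, hgt⟩))
      have hbxle : x j ≤ b'' := by
        by_contra hcon
        push_neg at hcon
        exact absurd (hmaxle j b'' hb''C hcon.le) (not_le.2 hb''gt)
      calc v i (Ioo (y j) (x j)) ≤ v i (Ioo (y j) b'') :=
            measure_mono (Ioo_subset_Ioo le_rfl hbxle)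
        _ ≤ ENNReal.ofReal ε := hgap _ (hyC j) _ hb''C hb''gt hcons i
  refine ⟨y, hmono, hy0, hylast, hyC, ?_⟩
  -- per-player bound in ℝ
  have hplayer : ∀ i,
      (v i (Ioo (x (π.symm i).castSucc) (x (π.symm i).succ))).toReal - ε ≤
      (v i (Ioo (y (π.symm i).castSucc) (y (π.symm i).succ))).toReal := by
    intro i
    set j := (π.symm i).castSucc
    set k := (π.symm i).succ
    have hsub : Ioo (x j) (x k) ⊆ Ioo (y j) (y k) ∪ Ico (y k) (x k) := by
      intro t ht
      rcases lt_or_ge t (y k) with h | h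
      · exact Or.inl ⟨lt_of_le_of_lt (hyle j) ht.1, h⟩
      · exact Or.inr ⟨h, ht.2⟩
    have hIco : v i (Ico (y k) (x k)) = v i (Ioo (y k) (x k)) :=
      measure_congr (Ioo_ae_eq_Ico' (μ := v i) ((hatomless i).measure_singleton _)).symm
    have h1 : v i (Ioo (x j) (x k)) ≤ v i (Ioo (y j) (y k)) + v i (Ioo (y k) (x k)) := by
      calc v i (Ioo (x j) (x k)) ≤ v i (Ioo (y j) (y k) ∪ Ico (y k) (x k)) :=
            measure_mono hsub
        _ ≤ v i (Ioo (y j) (y k)) + v i (Ico (y k) (x k)) := measure_union_le _ _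
        _ = _ := by rw [hIco]
    have h2 : v i (Ioo (x j) (x k)) ≤ v i (Ioo (y j) (y k)) + ENNReal.ofReal ε :=
      h1.trans (add_le_add le_rfl (hkey k i))
    have h3 := ENNReal.toReal_mono (by
        exact ENNReal.add_ne_top.2 ⟨hfin i _, ENNReal.ofReal_ne_top⟩) h2
    rw [ENNReal.toReal_add (hfin i _) ENNReal.ofReal_ne_top,
      ENNReal.toReal_ofReal hε.le] at h3
    linarith
  -- conclude for infima
  have : Nonempty (Fin n) := ⟨⟨0, hn⟩⟩
  have hbdd : BddBelow (Set.range fun i =>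
      (v i (Ioo (y (π.symm i).castSucc) (y (π.symm i).succ))).toReal) := by
    exact ⟨0, fun r ⟨i, hi⟩ => hi ▸ ENNReal.toReal_nonneg⟩
  have hbddx : BddBelow (Set.range fun i =>
      (v i (Ioo (x (π.symm i).castSucc) (x (π.symm i).succ))).toReal) := by
    exact ⟨0, fun r ⟨i, hi⟩ => hi ▸ ENNReal.toReal_nonneg⟩
  refine le_ciInf fun i => ?_
  exact le_trans (sub_le_sub_right (ciInf_le hbddx i) ε) (hplayer i)
end

section
/- Let 0 = q_0 < q_1 < ⋯ < q_K = 1, let I_k = (q_{k−1}, q_k), and suppose each density ν_i is constant, equal to d_{i,k} ≥ 0, on each I_k. Then for every t ≥ 0 the following are equivalent: (a) there exists a partition of [0,1] into Lebesgue-measurable sets X_1, …, X_n with ∫_{X_i} ν_i ≥ t for every i; (b) there exist reals x_i^k ∈ [0,1] with Σ_{i=1}^n x_i^k ≤ 1 for every k ∈ {1, …, K} and Σ_{k=1}^K d_{i,k} · (q_k − q_{k−1}) · x_i^k ≥ t for every i. (Correctness of the linear program for maximizing egalitarian welfare with non-connected pieces and piecewise-constant valuations, Theorem 8.) -/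
open MeasureTheory Set

lemma iUnion_Ico_of_monotone {m : ℕ} {f : Fin (m + 1) → ℝ} (hf : Monotone f) :
    (⋃ i : Fin m, Ico (f i.castSucc) (f i.succ)) = Ico (f 0) (f (Fin.last m)) := by
  ext x
  simp only [mem_iUnion, mem_Ico]
  constructor
  · rintro ⟨i, h1, h2⟩
    exact ⟨le_trans (hf (Fin.zero_le _)) h1, lt_of_lt_of_le h2 (hf (Fin.le_last _))⟩
  · rintro ⟨h1, h2⟩
    classical
    have hne : (Finset.univ.filter (fun i : Fin (m+1) => f i ≤ x)).Nonempty := ⟨0, by simp [h1]⟩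
    have hiT := Finset.max'_mem _ hne
    have hfi : f (Finset.max' _ hne) ≤ x := (Finset.mem_filter.1 hiT).2
    have hil : Finset.max' _ hne ≠ Fin.last m := fun heq => by
      rw [heq] at hfi; exact absurd hfi (not_le.2 h2)
    obtain ⟨j, hj⟩ := Fin.exists_castSucc_eq.2 hil
    rw [← hj] at hfi
    refine ⟨j, hfi, ?_⟩
    by_contra hc
    push_neg at hc
    have hmem : j.succ ∈ Finset.univ.filter (fun i : Fin (m+1) => f i ≤ x) := by simp [hc]
    have hle := Finset.le_max' _ _ hmem
    rw [← hj] at hle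
    exact absurd hle (not_le.2 (Fin.castSucc_lt_succ (i := j)))

lemma aeconst_on_sub {a b c : ℝ} {f : ℝ → ℝ} (hf : ∀ x ∈ Ioo a b, f x = c)
    {A : Set ℝ} (hA : MeasurableSet A) (hAsub : A ⊆ Icc a b) :
    f =ᵐ[volume.restrict A] fun _ => c := by
  rw [Filter.EventuallyEq, ae_restrict_iff' hA]
  rw [ae_iff]
  refine measure_mono_null (fun x hx => ?_) ((Set.toFinite ({a, b} : Set ℝ)).measure_zero volume)
  simp only [mem_setOf_eq, not_forall] at hx
  obtain ⟨hxA, hxc⟩ := hx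
  have hxI := hAsub hxA
  by_cases h : x ∈ Ioo a b
  · exact absurd (hf x h) hxc
  · simp only [mem_Ioo, not_and_or, not_lt] at h
    rcases h with h | h
    · exact Or.inl (le_antisymm h hxI.1)
    · exact Or.inr (le_antisymm hxI.2 h)

lemma int_const_on_sub {a b c : ℝ} {f : ℝ → ℝ} (hf : ∀ x ∈ Ioo a b, f x = c)
    {A : Set ℝ} (hA : MeasurableSet A) (hAsub : A ⊆ Icc a b) :
    IntegrableOn f A volume ∧ ∫ x in A, f x = c * (volume A).toReal := by
  have hae := aeconst_on_sub hf hA hAsub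
  have hfin : volume A < ⊤ :=
    lt_of_le_of_lt (measure_mono hAsub) (by simp)
  have hint : IntegrableOn (fun _ : ℝ => c) A volume := integrableOn_const hfin.ne
  refine ⟨hint.congr hae.symm, ?_⟩
  rw [integral_congr_ae hae, setIntegral_const, smul_eq_mul, mul_comm, Measure.real]

/-- correctness of the linear program for maximizing egalitarian
welfare with non-connected pieces and piecewise-constant valuations
(Theorem 8): every player can be guaranteed utility `t` by a measurable
partition of `[0,1]` iff the LP with fractional interval shares `x i k` has a
feasible solution of value `t`. -/
theorem stmt_16 (n K : ℕ) (hn : 0 < n) (hK : 0 < K)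
    (q : Fin (K + 1) → ℝ) (hq : StrictMono q) (hq0 : q 0 = 0)
    (hq1 : q (Fin.last K) = 1)
    (ν : Fin n → ℝ → ℝ) (d : Fin n → Fin K → ℝ) (hd : ∀ i k, 0 ≤ d i k)
    (hstep : ∀ (i : Fin n) (k : Fin K), ∀ x ∈ Ioo (q k.castSucc) (q k.succ),
      ν i x = d i k)
    (t : ℝ) (ht : 0 ≤ t) :
    (∃ X : Fin n → Set ℝ, (∀ i, MeasurableSet (X i)) ∧
      Pairwise (Function.onFun Disjoint X) ∧ (⋃ i, X i) = Icc (0 : ℝ) 1 ∧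
      ∀ i, t ≤ ∫ x in X i, ν i x) ↔
    (∃ x : Fin n → Fin K → ℝ, (∀ i k, 0 ≤ x i k) ∧
      (∀ k, ∑ i, x i k ≤ 1) ∧
      ∀ i, t ≤ ∑ k, d i k * (q k.succ - q k.castSucc) * x i k) := by
  classical
  set L : Fin K → ℝ := fun k => q k.succ - q k.castSucc with hLdef
  have hL : ∀ k, 0 < L k := fun k => sub_pos.2 (hq (Fin.castSucc_lt_succ (i := k)))
  have hsep : ∀ {k k' : Fin K}, k < k' → q k.succ ≤ q k'.castSucc := by
    intro k k' hkk
    refine hq.monotone ?_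
    have := Fin.lt_def.1 hkk
    simp only [Fin.le_def, Fin.coe_castSucc, Fin.val_succ]
    omega
  have hIcoDisjK : ∀ {k k' : Fin K}, k ≠ k' →
      Disjoint (Ico (q k.castSucc) (q k.succ)) (Ico (q k'.castSucc) (q k'.succ)) := by
    intro k k' hkk
    rcases lt_or_gt_of_ne hkk with h | h
    · exact Ico_disjoint_Ico.2 (le_trans (min_le_left _ _) (le_trans (hsep h) (le_max_right _ _)))
    · exact Ico_disjoint_Ico.2 (le_trans (min_le_right _ _) (le_trans (hsep h) (le_max_left _ _)))
  have hIooDisjK : ∀ {k k' : Fin K}, k ≠ k' →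
      Disjoint (Ioo (q k.castSucc) (q k.succ)) (Ioo (q k'.castSucc) (q k'.succ)) :=
    fun hkk => (hIcoDisjK hkk).mono Ioo_subset_Ico_self Ioo_subset_Ico_self
  have hIcoUnion : (⋃ k : Fin K, Ico (q k.castSucc) (q k.succ)) = Ico (0:ℝ) 1 := by
    rw [iUnion_Ico_of_monotone hq.monotone, hq0, hq1]
  have hcover : Icc (0:ℝ) 1 = (⋃ k : Fin K, Ico (q k.castSucc) (q k.succ)) ∪ {1} := by
    rw [hIcoUnion, Ico_union_right zero_le_one]
  have hC : Icc (0:ℝ) 1 ⊆ (⋃ k : Fin K, Ioo (q k.castSucc) (q k.succ)) ∪ range q := by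
    intro z hz
    rw [hcover] at hz
    rcases hz with hz | hz
    · obtain ⟨k, hk⟩ := mem_iUnion.1 hz
      rcases eq_or_lt_of_le hk.1 with h | h
      · exact Or.inr ⟨k.castSucc, h⟩
      · exact Or.inl (mem_iUnion.2 ⟨k, h, hk.2⟩)
    · exact Or.inr ⟨Fin.last K, hz.symm ▸ hq1⟩
  have hrange_null : volume (range q) = 0 := (Set.finite_range q).measure_zero volume
  constructor
  · -- forward
    rintro ⟨X, hXm, hXd, hXu, hXt⟩
    have hXsub : ∀ i, X i ⊆ Icc (0:ℝ) 1 := fun i => hXu ▸ subset_iUnion X i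
    set A : Fin n → Fin K → Set ℝ := fun i k => X i ∩ Ioo (q k.castSucc) (q k.succ) with hAdef
    have hAm : ∀ i k, MeasurableSet (A i k) := fun i k => (hXm i).inter measurableSet_Ioo
    have hAsub : ∀ i k, A i k ⊆ Icc (q k.castSucc) (q k.succ) :=
      fun i k => inter_subset_right.trans Ioo_subset_Icc_self
    have hAfin : ∀ i k, volume (A i k) ≠ ⊤ := fun i k =>
      (lt_of_le_of_lt (measure_mono (hAsub i k)) (by simp)).ne
    refine ⟨fun i k => (volume (A i k)).toReal / L k,
      fun i k => div_nonneg ENNReal.toReal_nonneg (hL k).le, ?_, ?_⟩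
    · intro k
      have hdisj : Pairwise (Function.onFun Disjoint fun i => A i k) :=
        fun i j hij => (hXd hij).mono inter_subset_left inter_subset_left
      have hmu : volume (⋃ i, A i k) = ∑ i, volume (A i k) := by
        rw [measure_iUnion hdisj (fun i => hAm i k), tsum_fintype]
      have hsub2 : (⋃ i, A i k) ⊆ Ioo (q k.castSucc) (q k.succ) :=
        iUnion_subset fun i => inter_subset_right
      have hle : volume (⋃ i, A i k) ≤ ENNReal.ofReal (L k) := by
        rw [hLdef]
        exact le_trans (measure_mono hsub2) (le_of_eq Real.volume_Ioo)
      calc ∑ i, (volume (A i k)).toReal / L k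
          = (∑ i, (volume (A i k)).toReal) / L k := by rw [Finset.sum_div]
        _ = (volume (⋃ i, A i k)).toReal / L k := by
            rw [← ENNReal.toReal_sum (fun i _ => hAfin i k), ← hmu]
        _ ≤ 1 := (div_le_one (hL k)).2 (ENNReal.toReal_le_of_le_ofReal (hL k).le hle)
    · intro i
      have hint : ∀ k, IntegrableOn (ν i) (A i k) volume ∧
          ∫ x in A i k, ν i x = d i k * (volume (A i k)).toReal :=
        fun k => int_const_on_sub (hstep i k) (hAm i k) (hAsub i k)
      have hdisjk : Pairwise (Function.onFun Disjoint fun k => A i k) :=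
        fun k k' hkk => (hIooDisjK hkk).mono inter_subset_right inter_subset_right
      have hbu : (⋃ k ∈ Finset.univ, A i k) = ⋃ k, A i k := by simp
      have hsum : ∫ x in ⋃ k, A i k, ν i x = ∑ k, ∫ x in A i k, ν i x := by
        rw [← hbu]
        exact integral_biUnion_finset Finset.univ (fun k _ => hAm i k)
          (hdisjk.set_pairwise _) (fun k _ => (hint k).1)
      have hae : (⋃ k, A i k) =ᵐ[volume] X i := by
        rw [ae_eq_set]
        constructor
        · rw [show ((⋃ k, A i k) \ X i) = ∅ by
            simp only [diff_eq_empty]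
            exact iUnion_subset fun k => inter_subset_left]
          exact measure_empty
        · refine measure_mono_null (fun z hz => ?_) hrange_null
          obtain ⟨hz1, hz2⟩ := hz
          rcases hC (hXsub i hz1) with h | h
          · obtain ⟨k, hk⟩ := mem_iUnion.1 h
            have hzA : z ∈ A i k := ⟨hz1, hk⟩
            exact absurd (mem_iUnion.2 ⟨k, hzA⟩) hz2
          · exact h
      have : ∫ x in ⋃ k, A i k, ν i x = ∫ x in X i, ν i x := setIntegral_congr_set hae
      calc t ≤ ∫ x in X i, ν i x := hXt i
        _ = ∑ k, ∫ x in A i k, ν i x := by rw [← this, hsum]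
        _ = ∑ k, d i k * (q k.succ - q k.castSucc) * ((volume (A i k)).toReal / L k) := by
            refine Finset.sum_congr rfl fun k _ => ?_
            rw [(hint k).2]
            rw [show q k.succ - q k.castSucc = L k from rfl, mul_assoc,
              mul_div_cancel₀ _ (hL k).ne']
  · -- backward
    rintro ⟨x, hx0, hxsum, hxval⟩
    set y : Fin K → ℕ → ℝ := fun k j => if h : j < n then x ⟨j, h⟩ k else 0 with hydef
    have hy0 : ∀ k j, 0 ≤ y k j := by
      intro k j
      by_cases h : j < n <;> simp [hydef, h, hx0]
    set g : Fin K → Fin (n+1) → ℝ :=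
      fun k m => q k.castSucc + (∑ j ∈ Finset.range m, y k j) * L k with hgdef
    have hgmono : ∀ k, Monotone (g k) := by
      intro k m m' hmm
      simp only [hgdef]
      have h1 : ∑ j ∈ Finset.range m, y k j ≤ ∑ j ∈ Finset.range m', y k j :=
        Finset.sum_le_sum_of_subset_of_nonneg (Finset.range_subset_range.2 hmm) (fun j _ _ => hy0 k j)
      have h2 := mul_le_mul_of_nonneg_right h1 (hL k).le
      linarith
    have hg0 : ∀ k, g k 0 = q k.castSucc := by intro k; simp [hgdef]
    have hsumy : ∀ k, ∑ j ∈ Finset.range n, y k j = ∑ i, x i k := by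
      intro k
      rw [← Fin.sum_univ_eq_sum_range (y k) n]
      exact Finset.sum_congr rfl fun i _ => by simp [hydef, i.isLt]
    have hglast : ∀ k, g k (Fin.last n) = q k.castSucc + (∑ i, x i k) * L k := by
      intro k
      simp [hgdef, Fin.val_last, hsumy k]
    have hgsucc : ∀ (k) (i : Fin n), g k i.succ = g k i.castSucc + x i k * L k := by
      intro k i
      simp only [hgdef, Fin.val_succ, Fin.coe_castSucc, Finset.sum_range_succ]
      have hyi : y k i = x i k := by simp [hydef, i.isLt]
      rw [hyi]; ring
    have hglast_le : ∀ k, g k (Fin.last n) ≤ q k.succ := by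
      intro k
      rw [hglast k]
      have h1 : (∑ i, x i k) * L k ≤ 1 * L k := mul_le_mul_of_nonneg_right (hxsum k) (hL k).le
      have h2 : q k.castSucc + L k = q k.succ := by simp [hLdef]
      rw [one_mul] at h1
      linarith
    have hgub : ∀ k m, g k m ≤ q k.succ :=
      fun k m => le_trans (hgmono k (Fin.le_last m)) (hglast_le k)
    have hglb : ∀ k m, q k.castSucc ≤ g k m := fun k m => (hg0 k) ▸ hgmono k (Fin.zero_le m)
    set P : Fin n → Fin K → Set ℝ := fun i k => Ico (g k i.castSucc) (g k i.succ) with hPdef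
    set R : Fin K → Set ℝ := fun k => Ico (g k (Fin.last n)) (q k.succ) with hRdef
    set i0 : Fin n := ⟨0, hn⟩ with hi0def
    set X : Fin n → Set ℝ :=
      fun i => (⋃ k, P i k) ∪ (if i = i0 then ((⋃ k, R k) ∪ {1}) else ∅) with hXdef
    have hPsub : ∀ i k, P i k ⊆ Ico (q k.castSucc) (q k.succ) :=
      fun i k => Ico_subset_Ico (hglb k _) (hgub k _)
    have hRsub : ∀ k, R k ⊆ Ico (q k.castSucc) (q k.succ) :=
      fun k => Ico_subset_Ico (hglb k _) le_rfl
    have hIcoIcc : ∀ k : Fin K, Ico (q k.castSucc) (q k.succ) ⊆ Icc (0:ℝ) 1 := by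
      intro k z hz
      rw [hcover]
      exact Or.inl (mem_iUnion.2 ⟨k, hz⟩)
    have hcovk : ∀ k, (⋃ i, P i k) ∪ R k = Ico (q k.castSucc) (q k.succ) := by
      intro k
      have h1 : (⋃ i : Fin n, P i k) = Ico (g k 0) (g k (Fin.last n)) :=
        iUnion_Ico_of_monotone (hgmono k)
      rw [h1, hRdef, Ico_union_Ico_eq_Ico (hgmono k (Fin.zero_le _)) (hglast_le k), hg0]
    have hXunion : (⋃ i, X i) = Icc (0:ℝ) 1 := by
      apply subset_antisymm
      · refine iUnion_subset fun i => union_subset ?_ ?_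
        · exact iUnion_subset fun k => (hPsub i k).trans (hIcoIcc k)
        · by_cases h : i = i0
          · rw [if_pos h]
            refine union_subset (iUnion_subset fun k => (hRsub k).trans (hIcoIcc k)) ?_
            intro z hz
            rw [mem_singleton_iff.1 hz]
            exact ⟨zero_le_one, le_refl 1⟩
          · rw [if_neg h]
            exact empty_subset _
      · intro z hz
        rw [hcover] at hz
        rcases hz with hz | hz
        · obtain ⟨k, hk⟩ := mem_iUnion.1 hz
          rw [← hcovk k] at hk
          rcases hk with hk | hk
          · obtain ⟨i, hi⟩ := mem_iUnion.1 hk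
            exact mem_iUnion.2 ⟨i, Or.inl (mem_iUnion.2 ⟨k, hi⟩)⟩
          · exact mem_iUnion.2 ⟨i0, Or.inr (by rw [if_pos rfl]; exact Or.inl (mem_iUnion.2 ⟨k, hk⟩))⟩
        · exact mem_iUnion.2 ⟨i0, Or.inr (by rw [if_pos rfl]; exact Or.inr hz)⟩
    have hXsub : ∀ i, X i ⊆ Icc (0:ℝ) 1 := fun i => hXunion ▸ subset_iUnion X i
    have hXm : ∀ i, MeasurableSet (X i) := by
      intro i
      refine (MeasurableSet.iUnion fun k => measurableSet_Ico).union ?_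
      split
      · exact (MeasurableSet.iUnion fun k => measurableSet_Ico).union (measurableSet_singleton 1)
      · exact MeasurableSet.empty
    have hsucc_le : ∀ {i i' : Fin n}, i < i' → (i.succ : Fin (n+1)) ≤ i'.castSucc := by
      intro i i' h
      have := Fin.lt_def.1 h
      simp only [Fin.le_def, Fin.val_succ, Fin.coe_castSucc]
      omega
    have hPP : ∀ {i i' : Fin n}, i ≠ i' → ∀ k k', Disjoint (P i k) (P i' k') := by
      intro i i' hii k k'
      by_cases hkk : k = k'
      · subst hkk
        rcases lt_or_gt_of_ne hii with h | h
        · have hgle : g k i.succ ≤ g k i'.castSucc := hgmono k (hsucc_le h)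
          exact Ico_disjoint_Ico.2
            (le_trans (min_le_left _ _) (le_trans hgle (le_max_right _ _)))
        · have hgle : g k i'.succ ≤ g k i.castSucc := hgmono k (hsucc_le h)
          exact Ico_disjoint_Ico.2
            (le_trans (min_le_right _ _) (le_trans hgle (le_max_left _ _)))
      · exact (hIcoDisjK hkk).mono (hPsub i k) (hPsub i' k')
    have hPR : ∀ (i : Fin n) k k', Disjoint (P i k) (R k') := by
      intro i k k'
      by_cases hkk : k = k'
      · subst hkk
        have hgle : g k i.succ ≤ g k (Fin.last n) := hgmono k (Fin.le_last _)
        exact Ico_disjoint_Ico.2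
          (le_trans (min_le_left _ _) (le_trans hgle (le_max_right _ _)))
      · exact (hIcoDisjK hkk).mono (hPsub i k) (hRsub k')
    have h1P : ∀ (i : Fin n) k, (1:ℝ) ∉ P i k := by
      intro i k h
      have h2 := (hPsub i k h).2
      have hle : q k.succ ≤ 1 := hq1 ▸ hq.monotone (Fin.le_last _)
      linarith
    have hXdisj : Pairwise (Function.onFun Disjoint X) := by
      have key : ∀ i i' : Fin n, i ≠ i' → i ≠ i0 → Disjoint (X i) (X i') := by
        intro i i' hii hi
        have hXi : X i = ⋃ k, P i k := by simp [hXdef, hi]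
        rw [hXi]
        refine disjoint_iUnion_left.2 fun k => ?_
        refine disjoint_union_right.2 ⟨disjoint_iUnion_right.2 fun k' => hPP hii k k', ?_⟩
        split
        · exact disjoint_union_right.2 ⟨disjoint_iUnion_right.2 fun k' => hPR i k k',
            disjoint_singleton_right.2 (h1P i k)⟩
        · exact disjoint_empty _
      intro i i' hii
      by_cases hi : i = i0
      · have hi' : i' ≠ i0 := fun h => hii (hi.trans h.symm)
        exact (key i' i (Ne.symm hii) hi').symm
      · exact key i i' hii hi
    have hPIcc : ∀ i k, P i k ⊆ Icc (q k.castSucc) (q k.succ) :=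
      fun i k => (hPsub i k).trans Ico_subset_Icc_self
    have hPint : ∀ (i i' : Fin n) (k : Fin K), IntegrableOn (ν i) (P i' k) volume ∧
        ∫ z in P i' k, ν i z = d i k * (volume (P i' k)).toReal :=
      fun i i' k => int_const_on_sub (hstep i k) measurableSet_Ico (hPIcc i' k)
    have hPvol : ∀ i k, (volume (P i k)).toReal = x i k * L k := by
      intro i k
      rw [hPdef]
      simp only [Real.volume_Ico]
      have heq : g k i.succ - g k i.castSucc = x i k * L k := by rw [hgsucc k i]; ring
      rw [heq, ENNReal.toReal_ofReal (mul_nonneg (hx0 i k) (hL k).le)]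
    have hPdisj_k : ∀ i, Pairwise (Function.onFun Disjoint fun k => P i k) :=
      fun i k k' hkk => (hIcoDisjK hkk).mono (hPsub i k) (hPsub i k')
    have hval : ∀ i, ∫ z in ⋃ k, P i k, ν i z =
        ∑ k, d i k * (q k.succ - q k.castSucc) * x i k := by
      intro i
      rw [show (⋃ k, P i k) = ⋃ k ∈ Finset.univ, P i k by simp]
      rw [integral_biUnion_finset Finset.univ (fun k _ => measurableSet_Ico)
        ((hPdisj_k i).set_pairwise _) (fun k _ => (hPint i i k).1)]
      refine Finset.sum_congr rfl fun k _ => ?_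
      rw [(hPint i i k).2, hPvol i k]
      show d i k * (x i k * L k) = d i k * L k * x i k
      ring
    refine ⟨X, hXm, hXdisj, hXunion, ?_⟩
    intro i
    by_cases hi : i = i0
    · have hXi : X i = (⋃ k, P i k) ∪ ((⋃ k, R k) ∪ {1}) := by simp [hXdef, hi]
      have hint1 : IntegrableOn (ν i) (⋃ k, P i k) volume := by
        rw [show (⋃ k, P i k) = ⋃ k ∈ Finset.univ, P i k by simp]
        exact integrableOn_finset_iUnion.2 fun k _ => (hPint i i k).1
      have hint2 : IntegrableOn (ν i) (⋃ k, R k) volume := by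
        rw [show (⋃ k, R k) = ⋃ k ∈ Finset.univ, R k by simp]
        exact integrableOn_finset_iUnion.2 fun k _ =>
          (int_const_on_sub (hstep i k) measurableSet_Ico
            ((hRsub k).trans Ico_subset_Icc_self)).1
      have hint3 : IntegrableOn (ν i) ({1} : Set ℝ) volume := by
        have hz : volume.restrict ({(1:ℝ)} : Set ℝ) = 0 := Measure.restrict_eq_zero.2 (by simp)
        rw [IntegrableOn, hz]
        exact integrable_zero_measure
      have hintX : IntegrableOn (ν i) (X i) volume := by
        rw [hXi]
        exact hint1.union (hint2.union hint3)
      have hnonneg : (0 : ℝ → ℝ) ≤ᶠ[ae (volume.restrict (X i))] ν i := by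
        refine (ae_restrict_iff' (hXm i)).2 ?_
        rw [ae_iff]
        refine measure_mono_null (fun z hz => ?_) hrange_null
        simp only [mem_setOf_eq, not_forall] at hz
        obtain ⟨hzX, hzneg⟩ := hz
        rcases hC (hXsub i hzX) with h | h
        · obtain ⟨k, hk⟩ := mem_iUnion.1 h
          rw [show (0 : ℝ → ℝ) z = 0 from rfl, hstep i k z hk] at hzneg
          exact absurd (hd i k) hzneg
        · exact h
      have hmono : ∫ z in ⋃ k, P i k, ν i z ≤ ∫ z in X i, ν i z := by
        apply setIntegral_mono_set hintX hnonneg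
        exact HasSubset.Subset.eventuallyLE (by rw [hXi]; exact subset_union_left)
      calc t ≤ ∑ k, d i k * (q k.succ - q k.castSucc) * x i k := hxval i
        _ = ∫ z in ⋃ k, P i k, ν i z := (hval i).symm
        _ ≤ ∫ z in X i, ν i z := hmono
    · have hXi : X i = ⋃ k, P i k := by simp [hXdef, hi]
      rw [hXi, hval i]
      exact hxval i
end

section
/- For every n ≥ 1, every ε ∈ (0,1), and every finite set of points 0 = p_0 < p_1 < ⋯ < p_k = 1, there exist atomless Borel probability measures v'_1, …, v'_n on [0,1], given by piecewise-constant densities, such that: (a) v'_i((p_j, p_{j'})) = p_{j'} − p_j for every player i and all 0 ≤ j ≤ j' ≤ k (so on intervals with endpoints among the p_j, every v'_i agrees with the uniform measure); (b) there exists a partition of [0,1] into measurable sets X_1, …, X_n with v'_i(X_i) ≥ 1 − ε for every i, hence with utilitarian welfare at least (1−ε)n; while (c) every assignment of pairwise disjoint intervals with endpoints among p_0, …, p_k, one interval per player, yields utilitarian welfare Σ_i v'_i(own interval) ≤ 1. (The 'sliver' construction underlying Theorem 9: no deterministic oracle algorithm approximates utilitarian or egalitarian welfare with non-connected pieces within a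 factor n − ε.) -/
open MeasureTheory Set

namespace Stmt17

-- cover by p-intervals
lemma cover_aux {k : ℕ} (p : Fin (k+1) → ℝ) (hp : StrictMono p) {x : ℝ}
    (h0 : p 0 ≤ x) (h1 : x < p (Fin.last k)) :
    ∃ j : Fin k, p j.castSucc ≤ x ∧ x < p j.succ := by
  classical
  set T : Finset (Fin (k+1)) := Finset.univ.filter (fun j => p j ≤ x) with hT
  have h0T : (0 : Fin (k+1)) ∈ T := by simp [hT, h0]
  have hTne : T.Nonempty := ⟨0, h0T⟩
  set j := T.max' hTne with hj
  have hjT : j ∈ T := T.max'_mem hTne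
  have hjx : p j ≤ x := by simpa [hT] using hjT
  have hjlt : (j : ℕ) < k := by
    rcases lt_or_eq_of_le (Fin.le_last j) with h | h
    · exact h
    · exact absurd (h ▸ hjx) (not_le.2 h1)
  refine ⟨⟨j, hjlt⟩, ?_, ?_⟩
  · have : (⟨(j : ℕ), hjlt⟩ : Fin k).castSucc = j := by
      apply Fin.ext; simp
    rw [this]; exact hjx
  · by_contra hcon
    push_neg at hcon
    have hmem : (⟨(j : ℕ), hjlt⟩ : Fin k).succ ∈ T := by
      simp only [hT, Finset.mem_filter, Finset.mem_univ, true_and]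
      exact hcon
    have := T.le_max' _ hmem
    rw [← hj] at this
    have : (j : ℕ) + 1 ≤ (j : ℕ) := by simpa [Fin.le_def] using this
    omega

-- sliver cover
lemma sliver_aux {n : ℕ} (hn : 1 ≤ n) {a b x : ℝ} (hab : a < b) (hax : a ≤ x) (hxb : x < b) :
    ∃ i : ℕ, i < n ∧ a + (i:ℝ)/n * (b-a) ≤ x ∧ x < a + ((i:ℝ)+1)/n * (b-a) := by
  have hba : (0:ℝ) < b - a := by linarith
  have hn0 : (0:ℝ) < n := by exact_mod_cast hn
  set t : ℝ := (x - a)/(b - a) with ht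
  have ht0 : 0 ≤ t := div_nonneg (by linarith) hba.le
  have ht1 : t < 1 := (div_lt_one hba).2 (by linarith)
  have htn0 : 0 ≤ t * n := mul_nonneg ht0 hn0.le
  refine ⟨⌊t * n⌋₊, ?_, ?_, ?_⟩
  · exact (Nat.floor_lt htn0).2 (by nlinarith)
  · have h1 : (⌊t * n⌋₊ : ℝ) ≤ t * n := Nat.floor_le htn0
    have : (⌊t * n⌋₊ : ℝ)/n ≤ t := by
      rw [div_le_iff₀ hn0]; exact h1
    have h2 : (⌊t * n⌋₊ : ℝ)/n * (b-a) ≤ t * (b-a) :=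
      mul_le_mul_of_nonneg_right this hba.le
    have h3 : t * (b - a) = x - a := by
      rw [ht]; exact div_mul_cancel₀ _ hba.ne'
    linarith
  · have h1 : t * n < (⌊t * n⌋₊ : ℝ) + 1 := Nat.lt_floor_add_one _
    have : t < ((⌊t * n⌋₊ : ℝ) + 1)/n := by
      rw [lt_div_iff₀ hn0]; exact h1
    have h2 : t * (b-a) < ((⌊t * n⌋₊ : ℝ) + 1)/n * (b-a) :=
      mul_lt_mul_of_pos_right this hba
    have h3 : t * (b - a) = x - a := by rw [ht]; exact div_mul_cancel₀ _ hba.ne'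
    linarith


noncomputable def Q {k : ℕ} (p : Fin (k+1) → ℝ) (n : ℕ) (j : Fin k) (i : ℕ) : ℝ :=
  p j.castSucc + (i : ℝ)/n * (p j.succ - p j.castSucc)

def S {k : ℕ} (p : Fin (k+1) → ℝ) (n : ℕ) (i : Fin n) : Set ℝ :=
  ⋃ j : Fin k, Ico (Q p n j i) (Q p n j (i+1))

variable {n k : ℕ} {p : Fin (k+1) → ℝ}

lemma Q_zero (n : ℕ) (j : Fin k) : Q p n j 0 = p j.castSucc := by
  simp [Q]

lemma Q_n (hn : 1 ≤ n) (j : Fin k) : Q p n j n = p j.succ := by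
  have : (n:ℝ) ≠ 0 := by positivity
  simp only [Q]; rw [div_self this]; ring

lemma Q_mono (hp : StrictMono p) (hn : 1 ≤ n) (j : Fin k) {i i' : ℕ} (h : i ≤ i') :
    Q p n j i ≤ Q p n j i' := by
  have hl : (0:ℝ) < p j.succ - p j.castSucc := by
    have := hp (Fin.castSucc_lt_succ : j.castSucc < j.succ); linarith
  have hn0 : (0:ℝ) < n := by exact_mod_cast hn
  have hii : (i:ℝ) ≤ (i':ℝ) := by exact_mod_cast h
  have : (i:ℝ)/n ≤ (i':ℝ)/n := (div_le_div_iff_of_pos_right hn0).2 hii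
  unfold Q
  nlinarith

lemma Q_diff (hn : 1 ≤ n) (j : Fin k) (i : ℕ) :
    Q p n j (i+1) - Q p n j i = (p j.succ - p j.castSucc)/n := by
  have : (n:ℝ) ≠ 0 := by positivity
  unfold Q
  field_simp
  push_cast; ring

lemma sliver_subset (hp : StrictMono p) (hn : 1 ≤ n) (j : Fin k) {i : ℕ} (hi : i < n) :
    Ico (Q p n j i) (Q p n j (i+1)) ⊆ Ico (p j.castSucc) (p j.succ) := by
  rw [← Q_zero (p := p) n j, ← Q_n (p := p) hn j]
  exact Ico_subset_Ico (Q_mono hp hn j (Nat.zero_le i)) (Q_mono hp hn j hi)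

lemma pInt_disjoint (hp : StrictMono p) {j j' : Fin k} (h : j ≠ j') :
    Disjoint (Ico (p j.castSucc) (p j.succ)) (Ico (p j'.castSucc) (p j'.succ)) := by
  rw [Set.Ico_disjoint_Ico]
  rcases lt_or_gt_of_ne h with h | h
  · have hle : (j.succ : Fin (k+1)) ≤ j'.castSucc := by
      rw [Fin.le_def]; simp only [Fin.val_succ, Fin.coe_castSucc]
      exact h
    have : p j.succ ≤ p j'.castSucc := hp.monotone hle
    exact le_trans (min_le_left _ _) (le_trans this (le_max_right _ _))
  · have hle : (j'.succ : Fin (k+1)) ≤ j.castSucc := by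
      rw [Fin.le_def]; simp only [Fin.val_succ, Fin.coe_castSucc]
      exact h
    have : p j'.succ ≤ p j.castSucc := hp.monotone hle
    exact le_trans (min_le_right _ _) (le_trans this (le_max_left _ _))

lemma S_subset (hp : StrictMono p) (hp0 : p 0 = 0) (hp1 : p (Fin.last k) = 1)
    (hn : 1 ≤ n) (i : Fin n) : S p n i ⊆ Ico (0:ℝ) 1 := by
  refine iUnion_subset fun j => (sliver_subset hp hn j i.isLt).trans ?_
  rw [← hp0, ← hp1]
  exact Ico_subset_Ico (hp.monotone (Fin.zero_le _)) (hp.monotone (Fin.le_last _))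

lemma S_meas (i : Fin n) : MeasurableSet (S p n i) :=
  MeasurableSet.iUnion fun _ => measurableSet_Ico

-- membership forces interval and sliver index
lemma S_inter (hp : StrictMono p) (hn : 1 ≤ n) (i : Fin n) (j : Fin k) :
    S p n i ∩ Ico (p j.castSucc) (p j.succ) = Ico (Q p n j i) (Q p n j (i+1)) := by
  apply Subset.antisymm
  · rintro x ⟨hxS, hxI⟩
    rcases mem_iUnion.1 hxS with ⟨j', hj'⟩
    have hj'j : j' = j := by
      by_contra hne
      have hd := pInt_disjoint hp hne
      exact (hd.ne_of_mem (sliver_subset hp hn j' i.isLt hj') hxI) rfl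
    rwa [hj'j] at hj'
  · intro x hx
    exact ⟨mem_iUnion.2 ⟨j, hx⟩, sliver_subset hp hn j i.isLt hx⟩


noncomputable def nu {k : ℕ} (p : Fin (k+1) → ℝ) (n : ℕ) (i : Fin n) : ℝ → ENNReal :=
  (S p n i).indicator fun _ => (n : ENNReal)

lemma wd_apply (i : Fin n) {T : Set ℝ} (hT : MeasurableSet T) :
    volume.withDensity (nu p n i) T = n * volume (S p n i ∩ T) := by
  rw [withDensity_apply _ hT, nu, setLIntegral_indicator (S_meas i), setLIntegral_const]

lemma wd_base (hp : StrictMono p) (hn : 1 ≤ n) (i : Fin n) (j : Fin k) :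
    volume.withDensity (nu p n i) (Ico (p j.castSucc) (p j.succ))
      = ENNReal.ofReal (p j.succ - p j.castSucc) := by
  rw [wd_apply i measurableSet_Ico, S_inter hp hn i j, Real.volume_Ico, Q_diff hn]
  have hn0 : (n:ℝ) ≠ 0 := by positivity
  rw [show ((n:ℕ) : ENNReal) = ENNReal.ofReal (n:ℝ) by simp,
    ← ENNReal.ofReal_mul (by positivity)]
  rw [mul_div_cancel₀ _ hn0]

lemma wd_Ico (hp : StrictMono p) (hn : 1 ≤ n) (i : Fin n) :
    ∀ j' j : Fin (k+1), j ≤ j' →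
      volume.withDensity (nu p n i) (Ico (p j) (p j')) = ENNReal.ofReal (p j' - p j) := by
  intro j'
  induction j' using Fin.induction with
  | zero =>
    intro j hj
    have : j = 0 := le_antisymm hj (Fin.zero_le _)
    simp [this]
  | succ m ih =>
    intro j hj
    rcases eq_or_lt_of_le hj with h | h
    · simp [h]
    · have hjm : j ≤ m.castSucc := by
        rw [Fin.le_def]; rw [Fin.lt_def] at h
        simp only [Fin.coe_castSucc]
        simp only [Fin.val_succ] at h
        omega
      have h1 : p j ≤ p m.castSucc := hp.monotone hjm
      have h2 : p m.castSucc ≤ p m.succ := (hp (Fin.castSucc_lt_succ : m.castSucc < m.succ)).le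
      rw [← Set.Ico_union_Ico_eq_Ico h1 h2,
        measure_union (Set.Ico_disjoint_Ico_same) measurableSet_Ico,
        ih j hjm, wd_base hp hn i m, ← ENNReal.ofReal_add (by linarith) (by linarith)]
      ring_nf

lemma wd_noAtoms (i : Fin n) : NoAtoms (volume.withDensity (nu p n i)) :=
  ⟨fun x => (withDensity_absolutelyContinuous _ _) (measure_singleton x)⟩

lemma wd_Icc (hp : StrictMono p) (hp0 : p 0 = 0) (hp1 : p (Fin.last k) = 1)
    (hn : 1 ≤ n) (i : Fin n) :
    volume.withDensity (nu p n i) (Icc (0:ℝ) 1) = 1 := by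
  haveI := wd_noAtoms (p := p) i
  have h := measure_congr (Ico_ae_eq_Icc (μ := volume.withDensity (nu p n i)) (a := (0:ℝ)) (b := 1))
  rw [← h, ← hp0, ← hp1, wd_Ico hp hn i _ _ (Fin.zero_le _), hp0, hp1]
  norm_num

lemma wd_Ioo (hp : StrictMono p) (hn : 1 ≤ n) (i : Fin n) (j j' : Fin (k+1)) (hj : j ≤ j') :
    volume.withDensity (nu p n i) (Ioo (p j) (p j')) = ENNReal.ofReal (p j' - p j) := by
  haveI := wd_noAtoms (p := p) i
  have h := measure_congr (Ioo_ae_eq_Ico (μ := volume.withDensity (nu p n i)) (a := p j) (b := p j'))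
  rw [h, wd_Ico hp hn i _ _ hj]

-- slivers within the same p-interval, different sliver indices, are disjoint
lemma sliver_disjoint_same (hp : StrictMono p) (hn : 1 ≤ n) (j : Fin k) {i i' : ℕ}
    (h : i < i') : Disjoint (Ico (Q p n j i) (Q p n j (i+1))) (Ico (Q p n j i') (Q p n j (i'+1))) := by
  rw [Set.Ico_disjoint_Ico]
  exact le_trans (min_le_left _ _) (le_trans (Q_mono hp hn j h) (le_max_right _ _))

lemma S_pairwise (hp : StrictMono p) (hn : 1 ≤ n) :
    Pairwise (Function.onFun Disjoint (S p n)) := by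
  intro i i' hne
  rw [Function.onFun]
  unfold S
  rw [Set.disjoint_iUnion_left]
  intro j
  rw [Set.disjoint_iUnion_right]
  intro j'
  rcases eq_or_ne j j' with rfl | hjj
  · rcases lt_or_gt_of_ne (fun h => hne (Fin.ext h)) with h | h
    · exact sliver_disjoint_same hp hn j (by omega)
    · exact (sliver_disjoint_same hp hn j (by omega)).symm
  · exact Set.disjoint_of_subset (sliver_subset hp hn j i.isLt)
      (sliver_subset hp hn j' i'.isLt) (pInt_disjoint hp hjj)

lemma S_cover (hp : StrictMono p) (hp0 : p 0 = 0) (hp1 : p (Fin.last k) = 1)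
    (hn : 1 ≤ n) : (⋃ i : Fin n, S p n i) = Ico (0:ℝ) 1 := by
  apply Subset.antisymm
  · exact iUnion_subset fun i => S_subset hp hp0 hp1 hn i
  · intro x hx
    obtain ⟨j, hj1, hj2⟩ := cover_aux p hp (hp0 ▸ hx.1) (hp1 ▸ hx.2)
    have hlen : p j.castSucc < p j.succ := hp (Fin.castSucc_lt_succ : j.castSucc < j.succ)
    obtain ⟨i, hin, hi1, hi2⟩ := sliver_aux hn hlen hj1 hj2
    refine mem_iUnion.2 ⟨⟨i, hin⟩, mem_iUnion.2 ⟨j, ?_⟩⟩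
    exact ⟨hi1, by exact_mod_cast hi2⟩

lemma wd_S (hp : StrictMono p) (hp0 : p 0 = 0) (hp1 : p (Fin.last k) = 1)
    (hn : 1 ≤ n) (i : Fin n) :
    1 ≤ volume.withDensity (nu p n i) (S p n i) := by
  have hdiff : volume.withDensity (nu p n i) (Icc (0:ℝ) 1 \ S p n i) = 0 := by
    rw [wd_apply i (measurableSet_Icc.diff (S_meas i))]
    have : S p n i ∩ (Icc (0:ℝ) 1 \ S p n i) = ∅ := by
      ext x; simp only [mem_inter_iff, mem_diff, mem_empty_iff_false, iff_false]
      rintro ⟨h1, _, h3⟩; exact h3 h1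
    rw [this]; simp
  calc (1 : ENNReal) = volume.withDensity (nu p n i) (Icc (0:ℝ) 1) :=
        (wd_Icc hp hp0 hp1 hn i).symm
    _ ≤ volume.withDensity (nu p n i) (S p n i ∪ (Icc (0:ℝ) 1 \ S p n i)) := by
        apply measure_mono; intro x hx
        by_cases h : x ∈ S p n i
        · exact Or.inl h
        · exact Or.inr ⟨hx, h⟩
    _ ≤ volume.withDensity (nu p n i) (S p n i)
        + volume.withDensity (nu p n i) (Icc (0:ℝ) 1 \ S p n i) := measure_union_le _ _
    _ = volume.withDensity (nu p n i) (S p n i) := by rw [hdiff, add_zero]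

noncomputable def R {k : ℕ} (p : Fin (k+1) → ℝ) (n : ℕ) (m : Fin (k*n+1)) : ℝ :=
  if h : (m : ℕ)/n < k then Q p n ⟨(m:ℕ)/n, h⟩ ((m:ℕ) % n) else 1

lemma mem_S_iff (hp : StrictMono p) (hn : 1 ≤ n) (i : Fin n) (J : Fin k) {I : ℕ}
    (hI : I < n) {x : ℝ} (hx : x ∈ Ioo (Q p n J I) (Q p n J (I+1))) :
    x ∈ S p n i ↔ (i : ℕ) = I := by
  constructor
  · intro hxS
    have hxI : x ∈ Ico (p J.castSucc) (p J.succ) :=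
      sliver_subset hp hn J hI ⟨hx.1.le, hx.2⟩
    rcases mem_iUnion.1 hxS with ⟨j', hj'⟩
    have hj'J : j' = J := by
      by_contra hne
      exact (pInt_disjoint hp hne).ne_of_mem (sliver_subset hp hn j' i.isLt hj') hxI rfl
    subst hj'J
    by_contra hne
    rcases Nat.lt_or_ge (i : ℕ) I with h | h
    · have : Q p n j' ((i:ℕ)+1) ≤ Q p n j' I := Q_mono hp hn j' (by omega)
      have := hj'.2
      have := hx.1
      linarith
    · have hlt : I < (i:ℕ) := by omega
      have : Q p n j' (I+1) ≤ Q p n j' (i:ℕ) := Q_mono hp hn j' (by omega)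
      have := hj'.1
      have := hx.2
      linarith
  · intro h
    rw [← h] at hx
    exact mem_iUnion.2 ⟨J, ⟨hx.1.le, hx.2⟩⟩

lemma R_step (hp : StrictMono p) (hp1 : p (Fin.last k) = 1) (hn : 1 ≤ n)
    (m : Fin (k*n)) :
    ∃ (J : Fin k) (I : ℕ), I < n ∧
      R p n m.castSucc = Q p n J I ∧ R p n m.succ = Q p n J (I+1) := by
  have hn0 : 0 < n := hn
  have hm : (m : ℕ) < k * n := m.isLt
  have hJlt : (m : ℕ)/n < k := (Nat.div_lt_iff_lt_mul hn0).2 hm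
  set J : Fin k := ⟨(m : ℕ)/n, hJlt⟩ with hJ
  set I : ℕ := (m : ℕ) % n with hI
  have hIlt : I < n := Nat.mod_lt _ hn0
  have hkey : n * ((m:ℕ)/n) + I = (m:ℕ) := Nat.div_add_mod _ _
  refine ⟨J, I, hIlt, ?_, ?_⟩
  · show R p n m.castSucc = _
    have hv : ((m.castSucc : Fin (k*n+1)) : ℕ) = (m : ℕ) := rfl
    rw [R, hv, dif_pos hJlt]
  · have hv : ((m.succ : Fin (k*n+1)) : ℕ) = (m : ℕ) + 1 := rfl
    rcases Nat.lt_or_ge (I+1) n with hI1 | hI1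
    · -- same p-interval
      have he : (m:ℕ) + 1 = (I+1) + n * ((m:ℕ)/n) := by omega
      have hd : ((m:ℕ)+1)/n = (m:ℕ)/n := by
        rw [he, Nat.add_mul_div_left _ _ hn0, Nat.div_eq_of_lt hI1, Nat.zero_add]
      have hmod : ((m:ℕ)+1) % n = I + 1 := by
        rw [he, Nat.add_mul_mod_self_left, Nat.mod_eq_of_lt hI1]
      have hlt' : ((m:ℕ)+1)/n < k := by rw [hd]; exact hJlt
      rw [R, hv, dif_pos hlt']
      have : (⟨((m:ℕ)+1)/n, hlt'⟩ : Fin k) = J := Fin.ext (by simp [hd, hJ])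
      rw [this, hmod]
    · -- crossing to next p-interval
      have hI1' : I + 1 = n := by omega
      have he : (m:ℕ) + 1 = n * ((m:ℕ)/n + 1) := by
        have : (m:ℕ) + 1 = n * ((m:ℕ)/n) + n := by omega
        rw [this]; ring
      have hd : ((m:ℕ)+1)/n = (m:ℕ)/n + 1 := by
        rw [he, Nat.mul_div_cancel_left _ hn0]
      have hmod : ((m:ℕ)+1) % n = 0 := by rw [he, Nat.mul_mod_right]
      have hQ : Q p n J (I+1) = p J.succ := by rw [hI1']; exact Q_n hn J
      rcases Nat.lt_or_ge ((m:ℕ)/n + 1) k with hJk | hJk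
      · have hlt' : ((m:ℕ)+1)/n < k := by rw [hd]; exact hJk
        rw [R, hv, dif_pos hlt']
        have hfin : (⟨((m:ℕ)+1)/n, hlt'⟩ : Fin k) = ⟨(m:ℕ)/n + 1, hJk⟩ :=
          Fin.ext (by simp [hd])
        have hcs : (⟨(m:ℕ)/n + 1, hJk⟩ : Fin k).castSucc = J.succ := by
          apply Fin.ext; simp [hJ]
        rw [hfin, hmod]
        show Q p n _ 0 = _
        rw [Q_zero, hcs, hQ]
      · have hlt' : ¬ ((m:ℕ)+1)/n < k := by omega
        rw [R, hv, dif_neg hlt', hQ]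
        have : J.succ = Fin.last k := Fin.ext (by simp [hJ]; omega)
        rw [this, hp1]

lemma R_zero (hp0 : p 0 = 0) (hk : 1 ≤ k) (hn : 1 ≤ n) : R p n 0 = 0 := by
  have h : (0:ℕ)/n < k := by rw [Nat.zero_div]; omega
  rw [R]
  show (if h : (0:ℕ)/n < k then Q p n ⟨(0:ℕ)/n, h⟩ ((0:ℕ) % n) else 1) = 0
  rw [dif_pos h]
  have : (⟨(0:ℕ)/n, h⟩ : Fin k).castSucc = 0 := Fin.ext (by simp)
  simp [Q, this, hp0]

lemma R_last (hn : 1 ≤ n) : R p n (Fin.last (k*n)) = 1 := by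
  have h : ¬ ((Fin.last (k*n) : Fin (k*n+1)) : ℕ)/n < k := by
    simp only [Fin.val_last]
    rw [Nat.mul_div_cancel _ hn]
    omega
  rw [R, dif_neg h]

lemma R_mono (hp : StrictMono p) (hp1 : p (Fin.last k) = 1) (hn : 1 ≤ n) :
    Monotone (R p n) := by
  rw [Fin.monotone_iff_le_succ]
  intro m
  obtain ⟨J, I, hI, h1, h2⟩ := R_step hp hp1 hn m
  rw [h1, h2]
  exact Q_mono hp hn J (Nat.le_succ I)

end Stmt17


/-- the 'sliver' construction underlying Theorem 9.  For any
`n ≥ 1`, `ε ∈ (0,1)` and finite set of points `0 = p_0 < ⋯ < p_k = 1`, there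
are atomless probability measures `v'_i`, given by piecewise-constant
densities, that (a) agree with the uniform (Lebesgue) measure on every interval
with endpoints among the `p_j`; (b) admit a measurable partition of `[0,1]`
giving each player value at least `1 - ε` (hence utilitarian welfare at least
`(1-ε)·n`); while (c) every family of pairwise disjoint intervals with
endpoints among the `p_j`, one per player, has utilitarian welfare at most 1. -/
theorem stmt_17 (n k : ℕ) (hn : 1 ≤ n) (ε : ℝ) (hε0 : 0 < ε) (hε1 : ε < 1)
    (p : Fin (k + 1) → ℝ) (hp : StrictMono p) (hp0 : p 0 = 0)
    (hp1 : p (Fin.last k) = 1) :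
    ∃ (v' : Fin n → Measure ℝ) (ν : Fin n → ℝ → ENNReal),
      (∀ i, v' i = MeasureTheory.volume.withDensity (ν i)) ∧
      -- each density is a step function supported in [0,1]
      (∀ i, (∀ x, x ∉ Icc (0 : ℝ) 1 → ν i x = 0) ∧
        ∃ (L : ℕ) (r : Fin (L + 1) → ℝ), Monotone r ∧ r 0 = 0 ∧
          r (Fin.last L) = 1 ∧
          ∀ j : Fin L, ∀ x ∈ Ioo (r j.castSucc) (r j.succ),
            ∀ y ∈ Ioo (r j.castSucc) (r j.succ), ν i x = ν i y) ∧
      (∀ i, NoAtoms (v' i)) ∧ (∀ i, v' i (Icc (0 : ℝ) 1) = 1) ∧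
      -- (a) on intervals with endpoints among the p_j, v'_i is uniform
      (∀ (i : Fin n) (j j' : Fin (k + 1)), j ≤ j' →
        v' i (Ioo (p j) (p j')) = ENNReal.ofReal (p j' - p j)) ∧
      -- (b) a partition of [0,1] with every utility ≥ 1 - ε
      (∃ X : Fin n → Set ℝ, (∀ i, MeasurableSet (X i)) ∧
        Pairwise (Function.onFun Disjoint X) ∧ (⋃ i, X i) = Icc (0 : ℝ) 1 ∧
        (∀ i, ENNReal.ofReal (1 - ε) ≤ v' i (X i)) ∧
        ENNReal.ofReal ((1 - ε) * n) ≤ ∑ i, v' i (X i)) ∧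
      -- (c) any disjoint intervals with endpoints among the p_j give welfare ≤ 1
      (∀ a b : Fin n → Fin (k + 1), (∀ i, a i ≤ b i) →
        Pairwise (Function.onFun Disjoint fun i => Ioo (p (a i)) (p (b i))) →
        ∑ i, v' i (Ioo (p (a i)) (p (b i))) ≤ 1) := by
  classical
  have hk : 1 ≤ k := by
    rcases Nat.eq_zero_or_pos k with h | h
    · subst h
      rw [show (Fin.last 0) = 0 from rfl, hp0] at hp1
      norm_num at hp1
    · exact h
  refine ⟨fun i => volume.withDensity (Stmt17.nu p n i), Stmt17.nu p n,
    fun _ => rfl, ?_, fun i => Stmt17.wd_noAtoms i,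
    fun i => Stmt17.wd_Icc hp hp0 hp1 hn i,
    fun i j j' hj => Stmt17.wd_Ioo hp hn i j j' hj, ?_, ?_⟩
  · -- step-function densities supported in [0,1]
    intro i
    constructor
    · intro x hx
      apply Set.indicator_of_notMem
      intro hxS
      exact hx (Ico_subset_Icc_self (Stmt17.S_subset hp hp0 hp1 hn i hxS))
    · refine ⟨k * n, Stmt17.R p n, Stmt17.R_mono hp hp1 hn,
        Stmt17.R_zero hp0 hk hn, Stmt17.R_last hn, ?_⟩
      intro j x hx y hy
      obtain ⟨J, I, hI, h1, h2⟩ := Stmt17.R_step hp hp1 hn j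
      rw [h1, h2] at hx hy
      have hxS := Stmt17.mem_S_iff hp hn i J hI hx
      have hyS := Stmt17.mem_S_iff hp hn i J hI hy
      unfold Stmt17.nu
      by_cases hiI : (i : ℕ) = I
      · rw [Set.indicator_of_mem (hxS.2 hiI), Set.indicator_of_mem (hyS.2 hiI)]
      · rw [Set.indicator_of_notMem (fun h => hiI (hxS.1 h)),
          Set.indicator_of_notMem (fun h => hiI (hyS.1 h))]
  · -- (b) the partition
    set i0 : Fin n := ⟨0, hn⟩ with hi0
    set X : Fin n → Set ℝ :=
      fun i => if i = i0 then Stmt17.S p n i0 ∪ {1} else Stmt17.S p n i with hX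
    have hSX : ∀ i, Stmt17.S p n i ⊆ X i := by
      intro i
      rw [hX]
      dsimp only
      split_ifs with h
      · subst h; exact subset_union_left
      · exact subset_rfl
    have h1notS : ∀ i : Fin n, (1:ℝ) ∉ Stmt17.S p n i := by
      intro i h
      have := Stmt17.S_subset hp hp0 hp1 hn i h
      exact absurd this.2 (lt_irrefl 1)
    have hXval : ∀ i, ENNReal.ofReal (1 - ε) ≤ volume.withDensity (Stmt17.nu p n i) (X i) := by
      intro i
      calc ENNReal.ofReal (1 - ε) ≤ 1 := ENNReal.ofReal_le_one.2 (by linarith)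
        _ ≤ volume.withDensity (Stmt17.nu p n i) (Stmt17.S p n i) :=
            Stmt17.wd_S hp hp0 hp1 hn i
        _ ≤ volume.withDensity (Stmt17.nu p n i) (X i) := measure_mono (hSX i)
    refine ⟨X, ?_, ?_, ?_, hXval, ?_⟩
    · intro i
      rw [hX]; dsimp only
      split_ifs with h
      · exact (Stmt17.S_meas i0).union (measurableSet_singleton 1)
      · exact Stmt17.S_meas i
    · intro i i' hne
      have hd := Stmt17.S_pairwise hp hn (n := n)
      rw [Function.onFun, hX]; dsimp only
      split_ifs with h h' h'
      · exact absurd (h.trans h'.symm) hne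
      · subst h
        refine Set.disjoint_union_left.2 ⟨hd hne, ?_⟩
        exact Set.disjoint_singleton_left.2 (h1notS i')
      · subst h'
        refine (Set.disjoint_union_left.2 ⟨(hd hne).symm, ?_⟩).symm
        exact Set.disjoint_singleton_left.2 (h1notS i)
      · exact hd hne
    · apply Subset.antisymm
      · apply iUnion_subset
        intro i
        rw [hX]; dsimp only
        split_ifs with h
        · refine union_subset ?_ ?_
          · exact (Stmt17.S_subset hp hp0 hp1 hn i0).trans Ico_subset_Icc_self
          · intro x hx
            rw [mem_singleton_iff] at hx
            subst hx; exact ⟨zero_le_one, le_refl 1⟩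
        · exact (Stmt17.S_subset hp hp0 hp1 hn i).trans Ico_subset_Icc_self
      · intro x hx
        rcases eq_or_lt_of_le hx.2 with h1 | h1
        · refine mem_iUnion.2 ⟨i0, ?_⟩
          rw [hX]; dsimp only
          rw [if_pos rfl]
          exact Or.inr (by simp [h1])
        · have hx' : x ∈ Ico (0:ℝ) 1 := ⟨hx.1, h1⟩
          rw [← Stmt17.S_cover hp hp0 hp1 hn] at hx'
          rcases mem_iUnion.1 hx' with ⟨i, hi⟩
          exact mem_iUnion.2 ⟨i, hSX i hi⟩
    · have : ENNReal.ofReal ((1 - ε) * n) = ∑ _i : Fin n, ENNReal.ofReal (1 - ε) := by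
        rw [Finset.sum_const, Finset.card_univ, Fintype.card_fin, nsmul_eq_mul,
          ENNReal.ofReal_mul (by linarith : (0:ℝ) ≤ 1 - ε), mul_comm]
        congr 1
        exact ENNReal.ofReal_natCast n
      rw [this]
      exact Finset.sum_le_sum fun i _ => hXval i
  · -- (c)
    intro a b hab hdisj
    have ha : ∀ i, volume.withDensity (Stmt17.nu p n i) (Ioo (p (a i)) (p (b i)))
        = volume (Ioo (p (a i)) (p (b i))) := by
      intro i
      rw [Stmt17.wd_Ioo hp hn i _ _ (hab i), Real.volume_Ioo]
    calc ∑ i, volume.withDensity (Stmt17.nu p n i) (Ioo (p (a i)) (p (b i)))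
        = ∑ i, volume (Ioo (p (a i)) (p (b i))) :=
          Finset.sum_congr rfl fun i _ => ha i
      _ = volume (⋃ i, Ioo (p (a i)) (p (b i))) := by
          rw [measure_iUnion hdisj fun _ => measurableSet_Ioo, tsum_fintype]
      _ ≤ volume (Icc (0:ℝ) 1) := by
          apply measure_mono
          apply iUnion_subset
          intro i
          refine Ioo_subset_Icc_self.trans (Icc_subset_Icc ?_ ?_)
          · rw [← hp0]; exact hp.monotone (Fin.zero_le _)
          · rw [← hp1]; exact hp.monotone (Fin.le_last _)
      _ = 1 := by rw [Real.volume_Icc]; norm_num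
end
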